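/- arXiv:2504.17301 — 3 statements merged into one kernel-verified Lean document; each statement's English description precedes it below -/
import Mathlib

section
/- Let G be a finite solvable group and let K be the smallest normal subgroup of G such that G/K is nilpotent. If K is abelian, then K is complemented in G, and every complement of K in G is a Carter subgroup (i.e., a self-normalizing nilpotent subgroup) of G. -/
noncomputable section
open scoped Classical
open scoped commutatorElement

/-- `χ` is an irreducible (complex) character of the finite group `H`. -/
def IsIrrChar (H : Type) [Group H] (χ : H → ℂ) : Prop :=
  ∃ V : FDRep ℂ H, CategoryTheory.Simple V ∧ χ = V.character

/-- The usual inner product of class functions on `H`. -/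
def charInner (H : Type) [Group H] (χ θ : H → ℂ) : ℂ :=
  (Nat.card H : ℂ)⁻¹ * ∑ᶠ h : H, χ h * (starRingEnd ℂ) (θ h)

/-- `θ` is an irreducible constituent of the character `χ`. -/
def IsConstituent (H : Type) [Group H] (χ θ : H → ℂ) : Prop :=
  IsIrrChar H θ ∧ charInner H χ θ ≠ 0

variable {G : Type}

/-- Restriction of a character of `A` to a subgroup `B ≤ A`. -/
def resSub [Group G] {A B : Subgroup G} (h : B ≤ A) (χ : ↥A → ℂ) : ↥B → ℂ :=
  fun b => χ ⟨b, h b.2⟩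

/-- Restriction of a character of `G` to a subgroup `B`. -/
def resTop [Group G] (B : Subgroup G) (χ : G → ℂ) : ↥B → ℂ := fun b => χ b

/-- The induced character from `B ≤ A`. -/
def indSub [Group G] {A B : Subgroup G} (_h : B ≤ A) (φ : ↥B → ℂ) : ↥A → ℂ :=
  fun a => (Nat.card ↥B : ℂ)⁻¹ *
    ∑ᶠ x : ↥A, if hx : ((x : G) * a * (x : G)⁻¹) ∈ B then φ ⟨_, hx⟩ else 0

/-- `χ`, a character of `M ≤ G`, is invariant under conjugation by elements of `C`. -/
def ConjInv [Group G] (C M : Subgroup G) (χ : ↥M → ℂ) : Prop :=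
  ∀ c ∈ C, ∀ m : ↥M, ∀ hm : c * (m : G) * c⁻¹ ∈ M, χ ⟨c * m * c⁻¹, hm⟩ = χ m

/-- `χ`, a character of `M ≤ G`, is `G`-invariant. -/
def GInv [Group G] (M : Subgroup G) (χ : ↥M → ℂ) : Prop :=
  ∀ g : G, ∀ m : ↥M, ∀ hm : g * (m : G) * g⁻¹ ∈ M, χ ⟨g * m * g⁻¹, hm⟩ = χ m

/-- The field of values `ℚ(χ)` of a character, as a subfield of `ℂ`. -/
def fieldOfValues (H : Type) (χ : H → ℂ) : Subfield ℂ := Subfield.closure (Set.range χ)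

/-- The `n`-th cyclotomic field `ℚ_n` inside `ℂ`. -/
def cycSubfield (n : ℕ) : Subfield ℂ := Subfield.closure {x : ℂ | x ^ n = 1}

/-- `K` is the smallest normal subgroup of `G` with nilpotent quotient. -/
def NilpotentResidual [Group G] (K : Subgroup G) (hK : K.Normal) : Prop :=
  (letI := hK; Group.IsNilpotent (G ⧸ K)) ∧
    ∀ N : Subgroup G, (hN : N.Normal) → (letI := hN; Group.IsNilpotent (G ⧸ N)) → K ≤ N

/-- A Carter subgroup: a self-normalizing nilpotent subgroup. -/
def IsCarter [Group G] (C : Subgroup G) : Prop :=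
  Group.IsNilpotent ↥C ∧ Subgroup.normalizer (C : Set G) = C

/-- A linear character, i.e. a multiplicative homomorphism to `ℂ`. -/
def IsLinChar (H : Type) [Group H] (χ : H → ℂ) : Prop :=
  ∃ l : H →* ℂ, χ = ⇑l

/-- `Ext(G|θ)`: irreducible characters of `G` restricting to `θ` on `K`. -/
def ExtSet [Group G] (K : Subgroup G) (θ : ↥K → ℂ) : Set (G → ℂ) :=
  {χ | IsIrrChar G χ ∧ resTop K χ = θ}

/-- `Ext(A|φ)` for subgroups `B ≤ A` of `G`. -/
def ExtSub [Group G] {A B : Subgroup G} (h : B ≤ A) (φ : ↥B → ℂ) : Set (↥A → ℂ) :=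
  {χ | IsIrrChar ↥A χ ∧ resSub h χ = φ}


/-- The character of `G` induced from a character of the subgroup `B`. -/
def indTop [Group G] (B : Subgroup G) (φ : ↥B → ℂ) : G → ℂ :=
  fun g => (Nat.card ↥B : ℂ)⁻¹ *
    ∑ᶠ x : G, if hx : (x * g * x⁻¹) ∈ B then φ ⟨_, hx⟩ else 0

namespace CarterAux

theorem nilp_of_mulEquiv {H K : Type*} [Group H] [Group K] (e : H ≃* K)
    (h : Group.IsNilpotent H) : Group.IsNilpotent K :=
  nilpotent_of_surjective (h := h) e.toMonoidHom fun k => ⟨e.symm k, e.apply_symm_apply k⟩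

variable {G : Type} [Group G]

theorem nilp_of_quot_le_center (N : Subgroup G) [hN : N.Normal]
    (hle : N ≤ Subgroup.center G) (h : Group.IsNilpotent (G ⧸ N)) : Group.IsNilpotent G := by
  let f : (G ⧸ N) →* (G ⧸ Subgroup.center G) :=
    QuotientGroup.map N (Subgroup.center G) (MonoidHom.id G) hle
  have hf : Function.Surjective f := by
    intro x
    obtain ⟨g, rfl⟩ := QuotientGroup.mk_surjective x
    exact ⟨QuotientGroup.mk g, rfl⟩
  exact of_quotient_center_nilpotent (nilpotent_of_surjective f hf)

theorem resid_comm {K : Subgroup G} (hKn : K.Normal) (hK : NilpotentResidual K hKn) :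
    ⁅(⊤ : Subgroup G), K⁆ = K := by
  letI := hKn
  refine le_antisymm (Subgroup.commutator_le_right _ _) ?_
  set L := ⁅(⊤ : Subgroup G), K⁆ with hL
  haveI hLn : L.Normal := Subgroup.commutator_normal ⊤ K
  refine hK.2 L hLn ?_
  have hLK : L ≤ K := Subgroup.commutator_le_right _ _
  haveI : (K.map (QuotientGroup.mk' L)).Normal :=
    hKn.map _ (QuotientGroup.mk'_surjective L)
  have hcent : K.map (QuotientGroup.mk' L) ≤ Subgroup.center (G ⧸ L) := by
    rintro _ ⟨k, hk, rfl⟩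
    rw [Subgroup.mem_center_iff]
    intro x
    obtain ⟨g, rfl⟩ := QuotientGroup.mk'_surjective L x
    rw [← map_mul, ← map_mul]
    apply QuotientGroup.eq.mpr
    have h2 : (g * k)⁻¹ * (k * g) = ⁅k⁻¹, g⁻¹⁆ := by group
    rw [h2, hL, Subgroup.commutator_comm]
    exact Subgroup.commutator_mem_commutator (K.inv_mem hk) (Subgroup.mem_top _)
  apply nilp_of_quot_le_center _ hcent
  exact nilp_of_mulEquiv (QuotientGroup.quotientQuotientEquivQuotient L K hLK).symm hK.1

theorem resid_map {K A : Subgroup G} (hKn : K.Normal) (hK : NilpotentResidual K hKn)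
    (hAn : A.Normal) (hAK : A ≤ K) :
    letI := hAn
    NilpotentResidual (K.map (QuotientGroup.mk' A))
      (hKn.map _ (QuotientGroup.mk'_surjective A)) := by
  letI := hAn
  letI := hKn
  constructor
  · haveI : (K.map (QuotientGroup.mk' A)).Normal := hKn.map _ (QuotientGroup.mk'_surjective A)
    exact nilp_of_mulEquiv (QuotientGroup.quotientQuotientEquivQuotient A K hAK).symm hK.1
  · intro N hN hnil
    letI := hN
    rw [Subgroup.map_le_iff_le_comap]
    set φ : G →* (G ⧸ A) ⧸ N := (QuotientGroup.mk' N).comp (QuotientGroup.mk' A) with hφ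
    have hker : φ.ker = N.comap (QuotientGroup.mk' A) := by
      rw [← MonoidHom.comap_ker, QuotientGroup.ker_mk']
    have hsurj : Function.Surjective φ :=
      (QuotientGroup.mk'_surjective N).comp (QuotientGroup.mk'_surjective A)
    have hnilker : Group.IsNilpotent (G ⧸ φ.ker) :=
      nilp_of_mulEquiv (QuotientGroup.quotientKerEquivOfSurjective φ hsurj).symm hnil
    rw [← hker]
    exact hK.2 φ.ker (MonoidHom.normal_ker φ) hnilker

theorem eq_bot_of_commutator_eq_self {P N : Subgroup G} (hNP : N ≤ P)
    (hPnil : Group.IsNilpotent ↥P) (h : ⁅P, N⁆ = N) : N = ⊥ := by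
  obtain ⟨n, hn⟩ := nilpotent_iff_lowerCentralSeries.mp hPnil
  have hPtop : (⊤ : Subgroup ↥P).map P.subtype = P := by
    rw [← MonoidHom.range_eq_map, Subgroup.range_subtype]
  have key : ∀ i, N ≤ ((⊤ : Subgroup ↥P).lowerCentralSeries i).map P.subtype := by
    intro i
    induction i with
    | zero =>
      rw [lowerCentralSeries_zero, hPtop]; exact hNP
    | succ i ih =>
      rw [← h]
      calc ⁅P, N⁆ ≤ ⁅(⊤ : Subgroup ↥P).map P.subtype, ((⊤ : Subgroup ↥P).lowerCentralSeries i).map P.subtype⁆ := by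
            apply Subgroup.commutator_mono _ ih
            rw [hPtop]
        _ = (⁅(⊤ : Subgroup ↥P), (⊤ : Subgroup ↥P).lowerCentralSeries i⁆).map P.subtype :=
            (Subgroup.map_commutator ..).symm
        _ = ((⊤ : Subgroup ↥P).lowerCentralSeries (i+1)).map P.subtype := by
            rw [show (⊤ : Subgroup ↥P).lowerCentralSeries (i+1) = ⁅(⊤ : Subgroup ↥P).lowerCentralSeries i, ⊤⁆ from rfl,
              Subgroup.commutator_comm]
  have := key n
  rw [hn] at this
  simpa using this

theorem eq_bot_of_commutator_top_eq_self {N : Subgroup G} (hnil : Group.IsNilpotent G)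
    (h : ⁅(⊤ : Subgroup G), N⁆ = N) : N = ⊥ := by
  exact eq_bot_of_commutator_eq_self le_top (nilp_of_mulEquiv Subgroup.topEquiv.symm hnil) h



variable {G : Type} [Group G]

/-- Conjugation by `g` as a hom of a normal subgroup `K`. -/
def conjK {K : Subgroup G} (hKn : K.Normal) (g : G) : ↥K →* ↥K where
  toFun := fun k => ⟨g * k * g⁻¹, hKn.conj_mem k.1 k.2 g⟩
  map_one' := by ext; simp
  map_mul' := fun k₁ k₂ => by
    ext
    show g * (↑k₁ * ↑k₂) * g⁻¹ = g * ↑k₁ * g⁻¹ * (g * ↑k₂ * g⁻¹)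
    group

theorem coe_conjK {K : Subgroup G} (hKn : K.Normal) (g : G) (k : ↥K) :
    (conjK hKn g k : G) = g * k * g⁻¹ := rfl

variable [Fintype G]

theorem norm_map_lemma (H K : Subgroup G) (hKn : K.Normal)
    (hab : ∀ x y : ↥K, x * y = y * x) (hHK : ⁅H, K⁆ = K)
    (hcop : Nat.Coprime (Nat.card ↥H) (Nat.card ↥K)) :
    ∀ z ∈ K, (∀ h ∈ H, h * z = z * h) → z = 1 := by
  letI : CommGroup ↥K := { (inferInstance : Group ↥K) with mul_comm := fun a b => hab a b }
  let F : ↥K →* ↥K :=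
    { toFun := fun k => ∏ h : ↥H, conjK hKn ↑h k
      map_one' := by simp
      map_mul' := fun k₁ k₂ => by
        simp only [map_mul]
        exact Finset.prod_mul_distrib }
  have hFconj : ∀ (h₀ : ↥H) (k : ↥K), F (conjK hKn ↑h₀ k) = F k := by
    intro h₀ k
    show ∏ h : ↥H, conjK hKn ↑h (conjK hKn ↑h₀ k) = ∏ h : ↥H, conjK hKn ↑h k
    have h1 : ∀ h : ↥H, conjK hKn ↑h (conjK hKn ↑h₀ k) = conjK hKn ↑(h * h₀) k := by
      intro h; ext; push_cast [coe_conjK]; group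
    rw [Finset.prod_congr rfl (fun h _ => h1 h)]
    exact Equiv.prod_comp (Equiv.mulRight h₀) (fun h : ↥H => conjK hKn ↑h k)
  have hker : ∀ k : ↥K, F k = 1 := by
    have hsub : ⁅H, K⁆ ≤ F.ker.map K.subtype := by
      refine Subgroup.commutator_le.mpr ?_
      intro h hh k hk
      have hmem : ⁅h, k⁆ ∈ K := by
        have h2 : ⁅h, k⁆ = h * k * h⁻¹ * k⁻¹ := by group
        rw [h2]
        exact K.mul_mem (hKn.conj_mem k hk h) (K.inv_mem hk)
      refine ⟨⟨⁅h, k⁆, hmem⟩, ?_, rfl⟩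
      have hrep : (⟨⁅h, k⁆, hmem⟩ : ↥K) = conjK hKn h ⟨k, hk⟩ * (⟨k, hk⟩ : ↥K)⁻¹ := by
        ext; push_cast [coe_conjK]; group
      show F ⟨⁅h, k⁆, hmem⟩ = 1
      rw [hrep, map_mul, map_inv, hFconj ⟨h, hh⟩ ⟨k, hk⟩, mul_inv_cancel]
    intro k
    obtain ⟨k', hk', hcoe⟩ := hsub (show (k : G) ∈ ⁅H, K⁆ by rw [hHK]; exact k.2)
    have : k' = k := Subtype.ext hcoe
    rwa [this] at hk'
  intro z hz hcomm
  have h1 : F ⟨z, hz⟩ = (⟨z, hz⟩ : ↥K) ^ (Fintype.card ↥H) := by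
    show ∏ _h : ↥H, _ = _
    have h2 : ∀ h : ↥H, conjK hKn ↑h (⟨z, hz⟩ : ↥K) = ⟨z, hz⟩ := by
      intro h
      ext
      show ↑h * z * (↑h)⁻¹ = z
      rw [hcomm ↑h h.2]
      exact mul_inv_cancel_right z ↑h
    rw [Finset.prod_congr rfl (fun h _ => h2 h), Finset.prod_const, Finset.card_univ]
  have h2 := hker ⟨z, hz⟩
  rw [h1] at h2
  have hord1 : orderOf (⟨z, hz⟩ : ↥K) ∣ Nat.card ↥H :=
    orderOf_dvd_of_pow_eq_one (by rw [Nat.card_eq_fintype_card]; exact h2)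
  have hord2 : orderOf (⟨z, hz⟩ : ↥K) ∣ Nat.card ↥K := orderOf_dvd_natCard _
  have hone : orderOf (⟨z, hz⟩ : ↥K) = 1 :=
    Nat.dvd_one.mp (hcop ▸ Nat.dvd_gcd hord1 hord2)
  have := orderOf_eq_one_iff.mp hone
  exact Subtype.ext_iff.mp this

theorem averaging_lemma (H K P : Subgroup G) (hKn : K.Normal)
    (hab : ∀ x y : ↥K, x * y = y * x)
    (hcomm : ∀ h ∈ H, ∀ x ∈ P, ⁅h, x⁆ ∈ K)
    (hcop : Nat.Coprime (Nat.card ↥H) (Nat.card ↥K)) :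
    ∀ x ∈ P, ∃ z ∈ K, ∀ h ∈ H, h * (x * z) = x * z * h := by
  letI : CommGroup ↥K := { (inferInstance : Group ↥K) with mul_comm := fun a b => hab a b }
  intro x hx
  have hamem : ∀ h : ↥H, x⁻¹ * (↑h * x * (↑h)⁻¹) ∈ K := by
    intro h
    have h1 : x⁻¹ * (↑h * x * (↑h)⁻¹) = ⁅(↑h : G), x⁻¹⁆⁻¹ := by group
    rw [h1]
    exact K.inv_mem (hcomm ↑h h.2 x⁻¹ (P.inv_mem hx))
  let a : ↥H → ↥K := fun h => ⟨x⁻¹ * (↑h * x * (↑h)⁻¹), hamem h⟩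
  set n := Fintype.card ↥H with hn
  let y : ↥K := ∏ h : ↥H, a h
  have hconj_a : ∀ h₀ h : ↥H, conjK hKn ↑h₀ (a h) = (a h₀)⁻¹ * a (h₀ * h) := by
    intro h₀ h
    ext
    push_cast [coe_conjK, a]
    group
  have hconj_y : ∀ h₀ : ↥H, conjK hKn ↑h₀ y = ((a h₀)⁻¹) ^ n * y := by
    intro h₀
    show conjK hKn ↑h₀ (∏ h : ↥H, a h) = _
    rw [map_prod]
    calc ∏ h : ↥H, conjK hKn ↑h₀ (a h) = ∏ h : ↥H, ((a h₀)⁻¹ * a (h₀ * h)) :=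
          Finset.prod_congr rfl (fun h _ => hconj_a h₀ h)
      _ = (∏ _h : ↥H, (a h₀)⁻¹) * ∏ h : ↥H, a (h₀ * h) := Finset.prod_mul_distrib
      _ = ((a h₀)⁻¹) ^ n * y := by
          rw [Finset.prod_const, Finset.card_univ]
          congr 1
          exact Equiv.prod_comp (Equiv.mulLeft h₀) a
  obtain ⟨u, v, huv⟩ : IsCoprime (n : ℤ) ((Nat.card ↥K : ℕ) : ℤ) := by
    apply Nat.Coprime.isCoprime
    rw [hn, ← Nat.card_eq_fintype_card]
    exact hcop
  have hpow : ∀ w : ↥K, (w ^ n) ^ u = w := by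
    intro w
    have h1 : w ^ ((Nat.card ↥K : ℕ) : ℤ) = 1 := by
      rw [zpow_natCast]; exact pow_card_eq_one'
    calc (w ^ n) ^ u = (w ^ ((n : ℕ) : ℤ)) ^ u := by rw [zpow_natCast]
      _ = w ^ (((n : ℕ) : ℤ) * u) := by rw [← zpow_mul]
      _ = w ^ (1 - v * ((Nat.card ↥K : ℕ) : ℤ)) := by
          congr 1
          have : u * (n : ℤ) + v * ((Nat.card ↥K : ℕ) : ℤ) = 1 := huv
          linarith
      _ = w * ((w ^ ((Nat.card ↥K : ℕ) : ℤ)) ^ v)⁻¹ := by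
          rw [zpow_sub, zpow_one, ← zpow_mul, mul_comm v]
      _ = w := by rw [h1, one_zpow, inv_one, mul_one]
  set z : ↥K := y ^ u with hz
  have hconj_z : ∀ h₀ : ↥H, conjK hKn ↑h₀ z = (a h₀)⁻¹ * z := by
    intro h₀
    rw [hz, map_zpow, hconj_y, mul_zpow, hpow]
  refine ⟨(z : G), z.2, ?_⟩
  intro h hh
  have e1 : ↑(⟨h, hh⟩ : ↥H) * x * (↑(⟨h, hh⟩ : ↥H))⁻¹ = x * ↑(a ⟨h, hh⟩) := by
    show h * x * h⁻¹ = x * (x⁻¹ * (h * x * h⁻¹))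
    group
  have e2 : h * ↑z * h⁻¹ = ↑((a ⟨h, hh⟩)⁻¹ * z) := by
    have := congrArg (Subtype.val) (hconj_z ⟨h, hh⟩)
    rw [coe_conjK] at this
    exact this
  have key : h * (x * ↑z) * h⁻¹ = x * ↑z := by
    have : h * (x * ↑z) * h⁻¹ = (h * x * h⁻¹) * (h * ↑z * h⁻¹) := by group
    rw [this, e2, e1]
    push_cast
    group
  calc h * (x * ↑z) = (h * (x * ↑z) * h⁻¹) * h := by group
    _ = x * ↑z * h := by rw [key]




theorem mem_of_mem_ker {K : Subgroup G} (hKn : K.Normal) {k : G} (hk : k ∈ K) :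
    letI := hKn
    QuotientGroup.mk' K k = 1 := by
  letI := hKn
  rw [← MonoidHom.mem_ker, QuotientGroup.ker_mk']
  exact hk

theorem mem_of_mk'_eq_one {K : Subgroup G} (hKn : K.Normal) {k : G}
    (h : (letI := hKn; QuotientGroup.mk' K k) = 1) : k ∈ K := by
  letI := hKn
  rw [← QuotientGroup.ker_mk' K, MonoidHom.mem_ker]
  exact h

theorem card_comap_mk' [Fintype G] (K : Subgroup G) (hKn : K.Normal) (S : Subgroup (G ⧸ K)) :
    letI := hKn
    Nat.card ↥(S.comap (QuotientGroup.mk' K)) = Nat.card ↥S * Nat.card ↥K := by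
  letI := hKn
  set T := S.comap (QuotientGroup.mk' K) with hT
  have hKT : K ≤ T := by
    intro k hk
    show QuotientGroup.mk' K k ∈ S
    rw [mem_of_mem_ker hKn hk]
    exact S.one_mem
  set ψ : ↥T →* G ⧸ K := (QuotientGroup.mk' K).comp T.subtype with hψ
  have hrange : ψ.range = S := by
    rw [hψ, MonoidHom.range_comp, Subgroup.range_subtype]
    exact Subgroup.map_comap_eq_self_of_surjective (QuotientGroup.mk'_surjective K) S
  have hker : ψ.ker = K.subgroupOf T := by
    rw [hψ, ← MonoidHom.comap_ker, QuotientGroup.ker_mk']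
    rfl
  rw [Subgroup.card_eq_card_quotient_mul_card_subgroup ψ.ker]
  congr 1
  · calc Nat.card (↥T ⧸ ψ.ker) = Nat.card ↥(ψ.range) :=
          Nat.card_congr (QuotientGroup.quotientKerEquivRange ψ).toEquiv
      _ = Nat.card ↥S := by rw [hrange]
  · rw [hker]
    exact Nat.card_congr (Subgroup.subgroupOfEquivOfLe hKT).toEquiv.symm |>.symm

theorem compl_nilpotent {K C : Subgroup G} (hKn : K.Normal)
    (hnil : letI := hKn; Group.IsNilpotent (G ⧸ K)) (hC : K.IsComplement' C) :
    Group.IsNilpotent ↥C := by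
  letI := hKn
  set φ : ↥C →* G ⧸ K := (QuotientGroup.mk' K).comp C.subtype with hφ
  have hbij : Function.Bijective φ := by
    constructor
    · intro c₁ c₂ hcc
      have h1 : (↑c₁ : G)⁻¹ * ↑c₂ ∈ K := by
        rw [← QuotientGroup.eq]
        exact hcc
      have h2 : (↑c₁ : G)⁻¹ * ↑c₂ ∈ C := C.mul_mem (C.inv_mem c₁.2) c₂.2
      have h3 := Subgroup.disjoint_def.mp hC.disjoint h1 h2
      ext
      exact inv_mul_eq_one.mp h3
    · intro q
      obtain ⟨g, rfl⟩ := QuotientGroup.mk'_surjective K q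
      obtain ⟨⟨⟨k, hk⟩, ⟨c, hc⟩⟩, hkc⟩ := hC.2 g
      refine ⟨⟨c, hc⟩, ?_⟩
      show QuotientGroup.mk' K c = QuotientGroup.mk' K g
      rw [← hkc]
      show QuotientGroup.mk' K c = QuotientGroup.mk' K (k * c)
      rw [map_mul, mem_of_mem_ker hKn hk, one_mul]
  exact nilp_of_mulEquiv (MulEquiv.ofBijective φ hbij).symm hnil




theorem orderOf_conj' (x h : G) : orderOf (x * h * x⁻¹) = orderOf h := by
  have := orderOf_injective (MulAut.conj x).toMonoidHom (MulEquiv.injective _) h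
  simpa [MulAut.conj_apply] using this

theorem mem_of_mk'_eq_one' {K : Subgroup G} [K.Normal] {k : G}
    (h : QuotientGroup.mk' K k = 1) : k ∈ K := by
  rw [← QuotientGroup.ker_mk' K, MonoidHom.mem_ker]
  exact h

theorem normal_pcomplement (Q : Type) [Group Q] [Fintype Q] (hnil : Group.IsNilpotent Q)
    (p : ℕ) (hp : p.Prime) :
    ∃ Pb Hb : Subgroup Q, Pb.Normal ∧ Hb.Normal ∧ IsPGroup p ↥Pb ∧
      ¬ p ∣ Nat.card ↥Hb ∧ Pb.IsComplement' Hb := by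
  haveI : Fact p.Prime := ⟨hp⟩
  obtain ⟨Pb⟩ : Nonempty (Sylow p Q) := Sylow.nonempty
  have hPbn : (Pb : Subgroup Q).Normal :=
    Sylow.normal_of_normalizerCondition (normalizerCondition_of_isNilpotent (h := hnil)) Pb
  haveI := hPbn
  obtain ⟨Hb, hHb⟩ := Subgroup.exists_right_complement'_of_coprime
    (N := (Pb : Subgroup Q)) Pb.card_coprime_index
  have hcard : Nat.card ↥Hb = (Pb : Subgroup Q).index := by
    have h1 := hHb.card_mul
    have h2 := (Pb : Subgroup Q).card_mul_index
    have h3 : 0 < Nat.card ↥(Pb : Subgroup Q) := Nat.card_pos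
    exact Nat.eq_of_mul_eq_mul_left h3 (h1.trans h2.symm)
  have hpHb : ¬ p ∣ Nat.card ↥Hb := by rw [hcard]; exact Pb.not_dvd_index
  set M := Subgroup.normalizer (Hb : Set Q) with hM
  haveI : (Hb.subgroupOf M).Normal := Subgroup.normal_in_normalizer
  have hHbM : Hb ≤ M := Subgroup.le_normalizer
  have hcard_sub : Nat.card ↥(Hb.subgroupOf M) = Nat.card ↥Hb :=
    Nat.card_congr (Subgroup.subgroupOfEquivOfLe hHbM).toEquiv
  have hq : Nat.card (↥M ⧸ Hb.subgroupOf M) * Nat.card ↥Hb = Nat.card ↥M := by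
    rw [← hcard_sub]
    exact (Subgroup.card_eq_card_quotient_mul_card_subgroup _).symm
  obtain ⟨nn, hnn⟩ := IsPGroup.iff_card.mp Pb.isPGroup'
  have hdvd2 : Nat.card (↥M ⧸ Hb.subgroupOf M) ∣ p ^ nn := by
    have h4 : Nat.card (↥M ⧸ Hb.subgroupOf M) * Nat.card ↥Hb ∣
        Nat.card ↥(Pb : Subgroup Q) * Nat.card ↥Hb := by
      rw [hq, hHb.card_mul]
      exact Subgroup.card_subgroup_dvd_card M
    have h5 := (Nat.mul_dvd_mul_iff_right (Nat.card_pos (α := ↥Hb))).mp h4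
    rwa [hnn] at h5
  have hchar : ∀ y, y ∈ Hb ↔ y ∈ M ∧ ¬ p ∣ orderOf y := by
    intro y
    constructor
    · intro hy
      refine ⟨hHbM hy, fun hpdvd => hpHb (hpdvd.trans (Subgroup.orderOf_dvd_natCard Hb hy))⟩
    · rintro ⟨hyM, hyord⟩
      set yb := QuotientGroup.mk' (Hb.subgroupOf M) (⟨y, hyM⟩ : ↥M) with hyb
      have h6 : orderOf yb ∣ orderOf y := by
        have := orderOf_map_dvd (QuotientGroup.mk' (Hb.subgroupOf M)) (⟨y, hyM⟩ : ↥M)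
        rwa [Subgroup.orderOf_mk] at this
      have h7 : orderOf yb ∣ p ^ nn := (orderOf_dvd_natCard yb).trans hdvd2
      obtain ⟨k, hk, hdk⟩ := (Nat.dvd_prime_pow hp).mp h7
      have h8 : orderOf yb = 1 := by
        rcases Nat.eq_zero_or_pos k with hk0 | hk0
        · rw [hdk, hk0, pow_zero]
        · exfalso
          apply hyord
          refine dvd_trans ?_ h6
          rw [hdk]
          exact dvd_pow_self p hk0.ne'
      have h10 : (⟨y, hyM⟩ : ↥M) ∈ Hb.subgroupOf M :=
        mem_of_mk'_eq_one' (orderOf_eq_one_iff.mp h8)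
      exact Subgroup.mem_subgroupOf.mp h10
  have hNM : Subgroup.normalizer (M : Set Q) ≤ M := by
    intro x hx
    have hx' := Subgroup.mem_normalizer_iff.mp hx
    rw [hM, Subgroup.mem_normalizer_iff]
    intro h
    rw [hchar h, hchar (x * h * x⁻¹), orderOf_conj']
    rw [← hx' h]
  have hself : Subgroup.normalizer (M : Set Q) = M := le_antisymm hNM Subgroup.le_normalizer
  have hMtop : M = ⊤ :=
    normalizerCondition_iff_only_full_group_self_normalizing.mp
      (normalizerCondition_of_isNilpotent (h := hnil)) M hself
  have hHbn : Hb.Normal := Subgroup.normalizer_eq_top_iff.mp hMtop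
  exact ⟨Pb, Hb, hPbn, hHbn, Pb.isPGroup', hpHb, hHb⟩


theorem PG (G : Type) [Group G] [Fintype G] (K : Subgroup G) (hKn : K.Normal)
    (hK : NilpotentResidual K hKn) (hab : ∀ x y : ↥K, x * y = y * x)
    (p : ℕ) (hp : p.Prime) (hpK : IsPGroup p ↥K) :
    (∃ C : Subgroup G, K.IsComplement' C) ∧ K ⊓ Subgroup.center G = ⊥ := by
  letI := hKn
  haveI : Fact p.Prime := ⟨hp⟩
  have habG : ∀ x ∈ K, ∀ y ∈ K, x * y = y * x := fun x hx y hy =>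
    Subtype.ext_iff.mp (hab ⟨x, hx⟩ ⟨y, hy⟩)
  have hnilQ : Group.IsNilpotent (G ⧸ K) := hK.1
  obtain ⟨Pb, Hb, hPbn, hHbn, hPbp, hpHb, hHb⟩ := normal_pcomplement (G ⧸ K) hnilQ p hp
  set φ := QuotientGroup.mk' K with hφdef
  set P1 := Pb.comap φ with hP1def
  set H1 := Hb.comap φ with hH1def
  have hKP1 : K ≤ P1 := fun k hk => by
    show φ k ∈ Pb; rw [mem_of_mem_ker hKn hk]; exact Pb.one_mem
  have hKH1 : K ≤ H1 := fun k hk => by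
    show φ k ∈ Hb; rw [mem_of_mem_ker hKn hk]; exact Hb.one_mem
  have hcardP1 : Nat.card ↥P1 = Nat.card ↥Pb * Nat.card ↥K := card_comap_mk' K hKn Pb
  have hcardH1 : Nat.card ↥H1 = Nat.card ↥Hb * Nat.card ↥K := card_comap_mk' K hKn Hb
  obtain ⟨nK, hnK⟩ := IsPGroup.iff_card.mp hpK
  have hcopHbp : Nat.Coprime (Nat.card ↥Hb) p :=
    (Nat.Prime.coprime_iff_not_dvd hp).mpr hpHb |>.symm
  have hcopHbK : Nat.Coprime (Nat.card ↥Hb) (Nat.card ↥K) := by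
    rw [hnK]; exact hcopHbp.pow_right nK
  -- Schur-Zassenhaus inside H1
  set K' := K.subgroupOf H1 with hK'def
  haveI hK'n : K'.Normal := hKn.subgroupOf H1
  have hcardK' : Nat.card ↥K' = Nat.card ↥K :=
    Nat.card_congr (Subgroup.subgroupOfEquivOfLe hKH1).toEquiv
  have hindexK' : K'.index = Nat.card ↥Hb := by
    have h1 := K'.card_mul_index
    rw [hcardK', hcardH1] at h1
    have h2 : 0 < Nat.card ↥K := Nat.card_pos
    apply Nat.eq_of_mul_eq_mul_left h2
    calc Nat.card ↥K * K'.index = Nat.card ↥Hb * Nat.card ↥K := h1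
      _ = Nat.card ↥K * Nat.card ↥Hb := mul_comm _ _
  obtain ⟨H2, hH2⟩ := Subgroup.exists_right_complement'_of_coprime (N := K') (by
    rw [hcardK', hindexK', hnK]
    exact (hcopHbp.pow_right nK).symm)
  set H := H2.map H1.subtype with hHdef
  have hHH1 : H ≤ H1 := Subgroup.map_subtype_le H2
  have hHb_of_H : ∀ h ∈ H, φ h ∈ Hb := fun h hh => hHH1 hh
  have hdisjHK : ∀ g ∈ H, g ∈ K → g = 1 := by
    rintro g ⟨g', hg', rfl⟩ hgK
    have h1 : g' ∈ K' := Subgroup.mem_subgroupOf.mpr hgK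
    have h2 := Subgroup.disjoint_def.mp hH2.disjoint h1 hg'
    rw [h2]; rfl
  have hcardH : Nat.card ↥H = Nat.card ↥Hb := by
    have e := Subgroup.equivMapOfInjective H2 H1.subtype (Subgroup.subtype_injective H1)
    have h1 : Nat.card ↥H = Nat.card ↥H2 := (Nat.card_congr e.toEquiv).symm
    have h2 := hH2.card_mul
    rw [hcardK', hcardH1] at h2
    have h3 : 0 < Nat.card ↥K := Nat.card_pos
    rw [h1]
    apply Nat.eq_of_mul_eq_mul_left h3
    calc Nat.card ↥K * Nat.card ↥H2 = Nat.card ↥Hb * Nat.card ↥K := h2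
      _ = Nat.card ↥K * Nat.card ↥Hb := mul_comm _ _
  have hcop : Nat.Coprime (Nat.card ↥H) (Nat.card ↥K) := by rw [hcardH]; exact hcopHbK
  have hHP1K : ∀ h ∈ H, ∀ x ∈ P1, ⁅h, x⁆ ∈ K := by
    intro h hh x hx
    apply mem_of_mk'_eq_one'
    rw [map_commutatorElement]
    refine commutatorElement_eq_one_iff_commute.mpr ?_
    exact (Subgroup.commute_of_normal_of_disjoint Pb Hb hPbn hHbn hHb.disjoint
      (φ x) (φ h) hx (hHb_of_H h hh)).symm
  have hP1H : P1.IsComplement' H := by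
    apply Subgroup.isComplement'_of_card_mul_and_disjoint
    · rw [hcardP1, hcardH]
      have h1 := hHb.card_mul
      have h2 := Subgroup.card_eq_card_quotient_mul_card_subgroup K
      rw [h2, ← h1]; ring
    · rw [Subgroup.disjoint_def]
      intro x hxP hxH
      have h3 : φ x = 1 := Subgroup.disjoint_def.mp hHb.disjoint hxP (hHb_of_H x hxH)
      exact hdisjHK x hxH (mem_of_mk'_eq_one' h3)
  have hdecomp : ∀ g : G, ∃ x ∈ P1, ∃ h ∈ H, g = x * h := by
    intro g
    obtain ⟨⟨⟨x, hx⟩, ⟨h, hh⟩⟩, hxh⟩ := hP1H.2 g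
    exact ⟨x, hx, h, hh, hxh.symm⟩
  set K0 := ⁅H, K⁆ with hK0def
  have hK0K : K0 ≤ K := Subgroup.commutator_le_right H K
  have hstep2 : ∀ x ∈ P1, ∀ h ∈ H, ∀ k ∈ K, x * ⁅h, k⁆ * x⁻¹ ∈ K0 := by
    intro x hx h hh k hk
    have hu'K : ⁅h⁻¹, x⁆ ∈ K := hHP1K h⁻¹ (H.inv_mem hh) x hx
    have hk₃K : x * k * x⁻¹ ∈ K := hKn.conj_mem k hk x
    have hcm := habG ⁅h⁻¹, x⁆ hu'K (x * k * x⁻¹) hk₃K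
    have e : x * ⁅h, k⁆ * x⁻¹ = ⁅h, x * k * x⁻¹⁆ := by
      simp only [commutatorElement_def, inv_inv] at hcm ⊢
      have e0 : x * (h * k * h⁻¹ * k⁻¹) * x⁻¹ =
          h * ((h⁻¹ * x * h * x⁻¹) * (x * k * x⁻¹) * (h⁻¹ * x * h * x⁻¹)⁻¹) * h⁻¹ *
            (x * k * x⁻¹)⁻¹ := by group
      have e1 : (h⁻¹ * x * h * x⁻¹) * (x * k * x⁻¹) * (h⁻¹ * x * h * x⁻¹)⁻¹ = x * k * x⁻¹ := by
        rw [hcm]; group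
      rw [e0, e1]
    rw [e]
    exact Subgroup.commutator_mem_commutator hh hk₃K
  have hgen : ∀ g : G, ∀ h ∈ H, ∀ k ∈ K, g * ⁅h, k⁆ * g⁻¹ ∈ K0 := by
    intro g h hh k hk
    obtain ⟨x, hx, c, hc, rfl⟩ := hdecomp g
    have e1 : (x * c) * ⁅h, k⁆ * (x * c)⁻¹ = x * (c * ⁅h, k⁆ * c⁻¹) * x⁻¹ := by group
    have e2 : c * ⁅h, k⁆ * c⁻¹ = ⁅c * h * c⁻¹, c * k * c⁻¹⁆ := by
      simp only [commutatorElement_def]; group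
    rw [e1, e2]
    exact hstep2 x hx _ (H.mul_mem (H.mul_mem hc hh) (H.inv_mem hc)) _ (hKn.conj_mem k hk c)
  have hK0n : K0.Normal := by
    constructor
    intro n hn g
    have hmap : K0.map (MulAut.conj g).toMonoidHom ≤ K0 := by
      rw [hK0def, Subgroup.commutator_def, MonoidHom.map_closure]
      refine (Subgroup.closure_le _).mpr ?_
      rintro _ ⟨w, ⟨h, hh, k, hk, rfl⟩, rfl⟩
      exact hgen g h hh k hk
    refine hmap ⟨n, hn, ?_⟩
    simp [MulAut.conj_apply]
  haveI := hK0n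
  set ψ := QuotientGroup.mk' K0 with hψdef
  set Kt := K.map ψ with hKtdef
  set Pt := P1.map ψ with hPtdef
  haveI hKtn : Kt.Normal := hKn.map ψ (QuotientGroup.mk'_surjective K0)
  have hresid := resid_map hKn hK hK0n hK0K
  have hKtcomm : ⁅(⊤ : Subgroup (G ⧸ K0)), Kt⁆ = Kt := resid_comm _ hresid
  have hKtPt : ⁅Pt, Kt⁆ = Kt := by
    refine le_antisymm (Subgroup.commutator_le_right Pt Kt) ?_
    have hle : ⁅(⊤ : Subgroup (G ⧸ K0)), Kt⁆ ≤ ⁅Pt, Kt⁆ := by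
      refine Subgroup.commutator_le.mpr ?_
      intro gb _ kb hkb
      obtain ⟨g, rfl⟩ := QuotientGroup.mk'_surjective K0 gb
      obtain ⟨k, hk, rfl⟩ := hkb
      obtain ⟨x, hx, c, hc, rfl⟩ := hdecomp g
      have e1 : ⁅ψ (x * c), ψ k⁆ = ψ ⁅x * c, k⁆ := (map_commutatorElement ψ _ _).symm
      have e2 : ⁅x * c, k⁆ = (x * ⁅c, k⁆ * x⁻¹) * ⁅x, k⁆ := by
        simp only [commutatorElement_def]; group
      have e3 : ψ (x * ⁅c, k⁆ * x⁻¹) = 1 := mem_of_mem_ker hK0n (hgen x c hc k hk)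
      rw [e1, e2, map_mul, e3, one_mul, map_commutatorElement]
      exact Subgroup.commutator_mem_commutator (Subgroup.mem_map_of_mem ψ hx)
        (Subgroup.mem_map_of_mem ψ hk)
    exact le_trans (le_of_eq hKtcomm.symm) hle
  have hKtPtle : Kt ≤ Pt := Subgroup.map_mono hKP1
  have hP1p : IsPGroup p ↥P1 := by
    rintro ⟨x, hx⟩
    obtain ⟨n1, hn1⟩ := hPbp ⟨φ x, hx⟩
    have h1 : φ (x ^ p ^ n1) = 1 := by
      rw [map_pow]
      exact Subtype.ext_iff.mp hn1
    have hxK : x ^ p ^ n1 ∈ K := mem_of_mk'_eq_one' h1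
    obtain ⟨n2, hn2⟩ := hpK ⟨x ^ p ^ n1, hxK⟩
    refine ⟨n1 + n2, ?_⟩
    have h2 : (x ^ p ^ n1) ^ p ^ n2 = 1 := Subtype.ext_iff.mp hn2
    apply Subtype.ext
    push_cast
    rw [pow_add, pow_mul]
    exact h2
  have hPtp : IsPGroup p ↥Pt := hP1p.map ψ
  have hPtnil : Group.IsNilpotent ↥Pt := hPtp.isNilpotent
  have hKtbot : Kt = ⊥ := eq_bot_of_commutator_eq_self hKtPtle hPtnil hKtPt
  have hK0 : ⁅H, K⁆ = K := by
    refine le_antisymm hK0K ?_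
    intro k hk
    have h1 : ψ k ∈ Kt := Subgroup.mem_map_of_mem ψ hk
    rw [hKtbot, Subgroup.mem_bot] at h1
    exact mem_of_mk'_eq_one' h1
  have hNM := norm_map_lemma H K hKn hab hK0 hcop
  have hAV := averaging_lemma H K P1 hKn hab hHP1K hcop
  set C := Subgroup.normalizer (H : Set G) with hCdef
  have hKC1 : ∀ k ∈ K, k ∈ C → k = 1 := by
    intro k hk hkC
    apply hNM k hk
    intro h hh
    have h1 : k * h * k⁻¹ ∈ H := (Subgroup.mem_normalizer_iff.mp hkC h).mp hh
    have h2 : ⁅k, h⁆ ∈ H := by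
      have e : ⁅k, h⁆ = (k * h * k⁻¹) * h⁻¹ := by group
      rw [e]; exact H.mul_mem h1 (H.inv_mem hh)
    have h3 : ⁅k, h⁆ ∈ K := by
      have e : ⁅k, h⁆ = k * (h * k⁻¹ * h⁻¹) := by group
      rw [e]; exact K.mul_mem hk (hKn.conj_mem k⁻¹ (K.inv_mem hk) h)
    have h4 : ⁅k, h⁆ = 1 := hdisjHK _ h2 h3
    exact (commutatorElement_eq_one_iff_commute.mp h4).symm.eq
  have hcompl : K.IsComplement' C := by
    constructor
    · rintro ⟨⟨k₁, hk₁⟩, ⟨c₁, hc₁⟩⟩ ⟨⟨k₂, hk₂⟩, ⟨c₂, hc₂⟩⟩ heq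
      simp only [Prod.mk.injEq] at heq ⊢
      have heq' : k₁ * c₁ = k₂ * c₂ := heq
      have h1 : k₂⁻¹ * k₁ = c₂ * c₁⁻¹ := by
        calc k₂⁻¹ * k₁ = k₂⁻¹ * (k₁ * c₁) * c₁⁻¹ := by group
          _ = k₂⁻¹ * (k₂ * c₂) * c₁⁻¹ := by rw [heq']
          _ = c₂ * c₁⁻¹ := by group
      have h2 : k₂⁻¹ * k₁ ∈ K := K.mul_mem (K.inv_mem hk₂) hk₁
      have h3 : k₂⁻¹ * k₁ ∈ C := h1 ▸ C.mul_mem hc₂ (C.inv_mem hc₁)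
      have h4 := hKC1 _ h2 h3
      have hkk : k₂ = k₁ := inv_mul_eq_one.mp h4
      have h5 : c₂ * c₁⁻¹ = 1 := h1 ▸ h4
      have hcc : c₂ = c₁ := mul_inv_eq_one.mp h5
      constructor
      · exact Subtype.ext hkk.symm
      · exact Subtype.ext hcc.symm
    · intro g
      obtain ⟨x, hx, h, hh, rfl⟩ := hdecomp g
      obtain ⟨z, hz, hzc⟩ := hAV x hx
      have hxzC : x * z ∈ C := by
        rw [hCdef, Subgroup.mem_normalizer_iff]
        intro w
        constructor
        · intro hw
          have h6 := hzc w hw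
          have e : (x * z) * w * (x * z)⁻¹ = w := by
            rw [← h6]; group
          rw [e]; exact hw
        · intro hw
          have h6 := hzc _ hw
          have e : w = (x * z) * w * (x * z)⁻¹ := by
            have h7 : (x * z) * w = ((x * z) * w * (x * z)⁻¹) * (x * z) := by group
            rw [h6] at h7
            exact mul_left_cancel h7
          rw [e]; exact hw
      have hk₂K : h⁻¹ * z⁻¹ * h ∈ K := by
        have e : h⁻¹ * z⁻¹ * h = h⁻¹ * z⁻¹ * (h⁻¹)⁻¹ := by group
        rw [e]; exact hKn.conj_mem z⁻¹ (K.inv_mem hz) h⁻¹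
      have hnC : x * z * h ∈ C := C.mul_mem hxzC (Subgroup.le_normalizer hh)
      refine ⟨⟨⟨(x * z * h) * (h⁻¹ * z⁻¹ * h) * (x * z * h)⁻¹,
        hKn.conj_mem _ hk₂K _⟩, ⟨x * z * h, hnC⟩⟩, ?_⟩
      show (x * z * h) * (h⁻¹ * z⁻¹ * h) * (x * z * h)⁻¹ * (x * z * h) = x * h
      group
  refine ⟨⟨C, hcompl⟩, ?_⟩
  rw [eq_bot_iff]
  rintro w ⟨hwK, hwZ⟩
  rw [Subgroup.mem_bot]
  apply hNM w hwK
  intro h _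
  exact Subgroup.mem_center_iff.mp hwZ h

theorem MAIN (n : ℕ) : ∀ (G : Type) [Group G] [Fintype G] (K : Subgroup G) (hKn : K.Normal)
    (hK : NilpotentResidual K hKn) (_hab : ∀ x y : ↥K, x * y = y * x),
    Nat.card ↥K ≤ n →
    (∃ C : Subgroup G, K.IsComplement' C) ∧ K ⊓ Subgroup.center G = ⊥ := by
  induction n with
  | zero =>
    intro G _ _ K hKn hK hab hcard
    exact absurd hcard (by have := Nat.card_pos (α := ↥K); omega)
  | succ n ih =>
    intro G _ _ K hKn hK hab hcard
    letI := hKn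
    by_cases hKbot : K = ⊥
    · subst hKbot
      refine ⟨⟨⊤, Subgroup.isComplement'_bot_top⟩, ?_⟩
      simp
    have habG : ∀ x ∈ K, ∀ y ∈ K, x * y = y * x := fun x hx y hy =>
      Subtype.ext_iff.mp (hab ⟨x, hx⟩ ⟨y, hy⟩)
    have hcard1 : 1 < Nat.card ↥K := (Subgroup.one_lt_card_iff_ne_bot K).mpr hKbot
    set p := (Nat.card ↥K).minFac with hpdef
    have hp : p.Prime := Nat.minFac_prime (by omega)
    haveI : Fact p.Prime := ⟨hp⟩
    have hpdvd : p ∣ Nat.card ↥K := Nat.minFac_dvd _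
    set B : Subgroup G :=
      { carrier := {x | x ∈ K ∧ ∃ m : ℕ, x ^ p ^ m = 1}
        one_mem' := ⟨K.one_mem, 0, one_pow _⟩
        mul_mem' := by
          rintro a b ⟨haK, m₁, h₁⟩ ⟨hbK, m₂, h₂⟩
          refine ⟨K.mul_mem haK hbK, m₁ + m₂, ?_⟩
          have hc : Commute a b := habG a haK b hbK
          have ea : a ^ p ^ (m₁ + m₂) = 1 := by
            rw [pow_add, pow_mul, h₁, one_pow]
          have eb : b ^ p ^ (m₁ + m₂) = 1 := by
            rw [pow_add, mul_comm (p ^ m₁), pow_mul, h₂, one_pow]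
          rw [hc.mul_pow, ea, eb, one_mul]
        inv_mem' := by
          rintro a ⟨haK, m, hm⟩
          exact ⟨K.inv_mem haK, m, by rw [inv_pow, hm, inv_one]⟩ } with hBdef
    set A : Subgroup G :=
      { carrier := {x | x ∈ K ∧ ¬ p ∣ orderOf x}
        one_mem' := ⟨K.one_mem, by rw [orderOf_one]; exact fun h => hp.ne_one (Nat.dvd_one.mp h)⟩
        mul_mem' := by
          rintro a b ⟨haK, ha⟩ ⟨hbK, hb⟩
          refine ⟨K.mul_mem haK hbK, fun hdvd => ?_⟩
          have hc : Commute a b := habG a haK b hbK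
          rcases (Nat.Prime.dvd_mul hp).mp (hdvd.trans hc.orderOf_mul_dvd_mul_orderOf) with h | h
          exacts [ha h, hb h]
        inv_mem' := by
          rintro a ⟨haK, ha⟩
          exact ⟨K.inv_mem haK, by rw [orderOf_inv]; exact ha⟩ } with hAdef
    have hAK : A ≤ K := fun x hx => hx.1
    have hBK : B ≤ K := fun x hx => hx.1
    have hBn : B.Normal := by
      constructor
      rintro x ⟨hxK, m, hm⟩ g
      refine ⟨hKn.conj_mem x hxK g, m, ?_⟩
      rw [conj_pow, hm, mul_one, mul_inv_cancel]
    have hAn : A.Normal := by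
      constructor
      rintro x ⟨hxK, hx⟩ g
      refine ⟨hKn.conj_mem x hxK g, ?_⟩
      rw [orderOf_conj']
      exact hx
    haveI := hAn; haveI := hBn
    have hAB : ∀ x, x ∈ A → x ∈ B → x = 1 := by
      rintro x ⟨_, hxo⟩ ⟨_, m, hm⟩
      obtain ⟨k, _hk, hdk⟩ := (Nat.dvd_prime_pow hp).mp (orderOf_dvd_of_pow_eq_one hm)
      rcases Nat.eq_zero_or_pos k with h0 | h0
      · rw [h0, pow_zero] at hdk; exact orderOf_eq_one_iff.mp hdk
      · exact absurd (hdk ▸ dvd_pow_self p h0.ne') hxo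
    have hdec : ∀ k ∈ K, ∃ a ∈ A, ∃ b ∈ B, k = a * b := by
      intro k hk
      set e := (orderOf k).factorization p with hedef
      set m := (orderOf k) / p ^ e with hmdef
      have hord_pos : 0 < orderOf k := orderOf_pos k
      have hfact : p ^ e * m = orderOf k := Nat.ordProj_mul_ordCompl_eq_self _ p
      have hcop : Nat.Coprime p m := Nat.coprime_ordCompl hp hord_pos.ne'
      obtain ⟨u, v, huv⟩ : IsCoprime ((p ^ e : ℕ) : ℤ) ((m : ℕ) : ℤ) :=
        Nat.Coprime.isCoprime (hcop.pow_left e)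
      have hsplit : k = (k ^ p ^ e) ^ u * (k ^ m) ^ v := by
        have h1 : (k ^ p ^ e) ^ u * (k ^ m) ^ v
            = k ^ (u * ((p ^ e : ℕ) : ℤ) + v * ((m : ℕ) : ℤ)) := by
          rw [zpow_add, mul_comm u, mul_comm v, zpow_mul, zpow_mul, zpow_natCast, zpow_natCast]
        rw [h1, huv, zpow_one]
      have hwm : (k ^ p ^ e) ^ m = 1 := by rw [← pow_mul, hfact, pow_orderOf_eq_one]
      have hwb : (k ^ m) ^ p ^ e = 1 := by
        rw [← pow_mul, mul_comm m, hfact, pow_orderOf_eq_one]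
      refine ⟨(k ^ p ^ e) ^ u, ?_, (k ^ m) ^ v, ?_, hsplit⟩
      · refine ⟨K.zpow_mem (K.pow_mem hk _) u, fun hdvd => ?_⟩
        have hpow1 : ((k ^ p ^ e) ^ u) ^ m = 1 := by
          rw [← zpow_natCast ((k ^ p ^ e) ^ u) m, ← zpow_mul, mul_comm u (m : ℤ), zpow_mul,
            zpow_natCast, hwm, one_zpow]
        exact (Nat.Prime.coprime_iff_not_dvd hp).mp hcop
          (hdvd.trans (orderOf_dvd_of_pow_eq_one hpow1))
      · refine ⟨K.zpow_mem (K.pow_mem hk _) v, e, ?_⟩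
        rw [← zpow_natCast ((k ^ m) ^ v) (p ^ e), ← zpow_mul, mul_comm v ((p ^ e : ℕ) : ℤ),
          zpow_mul, zpow_natCast, hwb, one_zpow]
    obtain ⟨kp, hkp⟩ := exists_prime_orderOf_dvd_card (G := ↥K) p
      (by rw [← Nat.card_eq_fintype_card]; exact hpdvd)
    have hordkp : orderOf (kp : G) = p := by rw [Subgroup.orderOf_coe, hkp]
    have hkpB : (kp : G) ∈ B := ⟨kp.2, 1, by rw [pow_one, ← hordkp, pow_orderOf_eq_one]⟩
    have hkp1 : (kp : G) ≠ 1 := by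
      intro h
      rw [h, orderOf_one] at hordkp
      exact hp.ne_one hordkp.symm
    have hBbot : B ≠ ⊥ := by
      intro h
      rw [h, Subgroup.mem_bot] at hkpB
      exact hkp1 hkpB
    have hLA : ⁅(⊤ : Subgroup G), A⁆ ≤ A := Subgroup.commutator_le_right ⊤ A
    have hMB : ⁅(⊤ : Subgroup G), B⁆ ≤ B := Subgroup.commutator_le_right ⊤ B
    have hKLM : K ≤ ⁅(⊤ : Subgroup G), A⁆ ⊔ ⁅(⊤ : Subgroup G), B⁆ := by
      have h1 : ⁅(⊤ : Subgroup G), K⁆ ≤ ⁅(⊤ : Subgroup G), A⁆ ⊔ ⁅(⊤ : Subgroup G), B⁆ := by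
        refine Subgroup.commutator_le.mpr ?_
        intro g _ k hk
        obtain ⟨a, ha, b, hb, rfl⟩ := hdec k hk
        have hw : ⁅g, b⁆ ∈ B := hMB (Subgroup.commutator_mem_commutator (Subgroup.mem_top g) hb)
        have hcm := habG a (hAK ha) ⁅g, b⁆ (hBK hw)
        have hcm' : ⁅g, b⁆ * a⁻¹ = a⁻¹ * ⁅g, b⁆ := by
          have h9 : a⁻¹ * (a * ⁅g, b⁆) * a⁻¹ = a⁻¹ * (⁅g, b⁆ * a) * a⁻¹ := by rw [hcm]
          calc ⁅g, b⁆ * a⁻¹ = a⁻¹ * (a * ⁅g, b⁆) * a⁻¹ := by group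
            _ = a⁻¹ * (⁅g, b⁆ * a) * a⁻¹ := h9
            _ = a⁻¹ * ⁅g, b⁆ := by group
        have e : ⁅g, a * b⁆ = ⁅g, a⁆ * ⁅g, b⁆ := by
          have e0 : ⁅g, a * b⁆ = (g * a * g⁻¹) * (⁅g, b⁆ * a⁻¹) := by
            simp only [commutatorElement_def]; group
          rw [e0, hcm']
          simp only [commutatorElement_def]; group
        rw [e]
        exact Subgroup.mul_mem _
          (Subgroup.mem_sup_left (Subgroup.commutator_mem_commutator (Subgroup.mem_top g) ha))
          (Subgroup.mem_sup_right (Subgroup.commutator_mem_commutator (Subgroup.mem_top g) hb))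
      calc K = ⁅(⊤ : Subgroup G), K⁆ := (resid_comm hKn hK).symm
        _ ≤ _ := h1
    have hB_top : ⁅(⊤ : Subgroup G), B⁆ = B := by
      refine le_antisymm hMB ?_
      intro b hb
      have h1 : b ∈ (↑(⁅(⊤ : Subgroup G), A⁆ ⊔ ⁅(⊤ : Subgroup G), B⁆) : Set G) := hKLM (hBK hb)
      rw [Subgroup.mul_normal] at h1
      obtain ⟨l, hl, w, hw, rfl⟩ := h1
      have hlB : l ∈ B := by
        have hlw : l = (l * w) * w⁻¹ := by group
        rw [hlw]
        exact B.mul_mem hb (B.inv_mem (hMB hw))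
      have hl1 := hAB l (hLA hl) hlB
      simpa [hl1] using hw
    -- quotient by B
    set K2 := K.map (QuotientGroup.mk' B) with hK2def
    have hK2n : K2.Normal := hKn.map _ (QuotientGroup.mk'_surjective B)
    have hK2res : NilpotentResidual K2 hK2n := resid_map hKn hK hBn hBK
    have hab2 : ∀ x y : ↥K2, x * y = y * x := by
      rintro ⟨x, hx⟩ ⟨y, hy⟩
      obtain ⟨kx, hkx, rfl⟩ := hx
      obtain ⟨ky, hky, rfl⟩ := hy
      apply Subtype.ext
      show QuotientGroup.mk' B kx * QuotientGroup.mk' B ky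
        = QuotientGroup.mk' B ky * QuotientGroup.mk' B kx
      rw [← map_mul, ← map_mul, habG kx hkx ky hky]
    have hcardK2 : Nat.card ↥K2 ≤ n := by
      set ψ2 : ↥K →* G ⧸ B := (QuotientGroup.mk' B).comp K.subtype with hψ2
      have hrange : ψ2.range = K2 := by rw [hψ2, MonoidHom.range_comp, Subgroup.range_subtype]
      have hker : ψ2.ker = B.subgroupOf K := by
        rw [hψ2, ← MonoidHom.comap_ker, QuotientGroup.ker_mk']; rfl
      have h1 : Nat.card ↥K = Nat.card (↥K ⧸ ψ2.ker) * Nat.card ↥(ψ2.ker) :=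
        Subgroup.card_eq_card_quotient_mul_card_subgroup _
      have h2 : Nat.card (↥K ⧸ ψ2.ker) = Nat.card ↥K2 := by
        calc Nat.card (↥K ⧸ ψ2.ker) = Nat.card ↥ψ2.range :=
              Nat.card_congr (QuotientGroup.quotientKerEquivRange ψ2).toEquiv
          _ = Nat.card ↥K2 := by rw [hrange]
      have h4 : Nat.card ↥(ψ2.ker) = Nat.card ↥B := by
        rw [hker]
        exact Nat.card_congr (Subgroup.subgroupOfEquivOfLe hBK).toEquiv
      have h5 : 1 < Nat.card ↥B := (Subgroup.one_lt_card_iff_ne_bot B).mpr hBbot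
      rw [h2, h4] at h1
      have h6 : Nat.card ↥K2 * 2 ≤ Nat.card ↥K := by
        rw [h1]; exact Nat.mul_le_mul_left _ h5
      have h7 : 0 < Nat.card ↥K2 := Nat.card_pos
      omega
    haveI : Fintype (G ⧸ B) := Fintype.ofFinite _
    obtain ⟨⟨Cb, hCb⟩, hZb⟩ := ih (G ⧸ B) K2 hK2n hK2res hab2 hcardK2
    set H1 := Cb.comap (QuotientGroup.mk' B) with hH1def
    have hBH1 : B ≤ H1 := fun b hb => by
      show QuotientGroup.mk' B b ∈ Cb
      rw [mem_of_mem_ker hBn hb]; exact Cb.one_mem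
    have hH1K : ∀ x, x ∈ H1 → x ∈ K → x ∈ B := by
      intro x hx hxK
      have h1 : QuotientGroup.mk' B x ∈ K2 := Subgroup.mem_map_of_mem _ hxK
      have h2 := Subgroup.disjoint_def.mp hCb.disjoint h1 hx
      exact mem_of_mk'_eq_one' h2
    have hGKH1 : ∀ g : G, ∃ k ∈ K, ∃ h ∈ H1, g = k * h := by
      intro g
      obtain ⟨⟨⟨kb, hkb⟩, ⟨cb, hcb⟩⟩, hkc⟩ := hCb.2 (QuotientGroup.mk' B g)
      obtain ⟨k, hkK, hk⟩ := hkb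
      refine ⟨k, hkK, k⁻¹ * g, ?_, by group⟩
      show QuotientGroup.mk' B (k⁻¹ * g) ∈ Cb
      have h3 : QuotientGroup.mk' B (k⁻¹ * g) = cb := by
        have h4 : kb * cb = QuotientGroup.mk' B g := hkc
        rw [map_mul, map_inv, hk, ← h4]
        group
      rw [h3]; exact hcb
    have hBH1comm : ⁅H1, B⁆ = B := by
      refine le_antisymm (Subgroup.commutator_le_right H1 B) ?_
      have h1 : ⁅(⊤ : Subgroup G), B⁆ ≤ ⁅H1, B⁆ := by
        refine Subgroup.commutator_le.mpr ?_
        intro g _ b hb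
        obtain ⟨k, hkK, h, hh, rfl⟩ := hGKH1 g
        have hw : ⁅h, b⁆ ∈ B := Subgroup.commutator_le_right H1 B
          (Subgroup.commutator_mem_commutator hh hb)
        have hcm1 := habG k hkK b (hBK hb)
        have hcm2 := habG k hkK ⁅h, b⁆ (hBK hw)
        have e : ⁅k * h, b⁆ = ⁅h, b⁆ := by
          have e0 : ⁅k * h, b⁆ = k * ⁅h, b⁆ * k⁻¹ * (k * b * k⁻¹ * b⁻¹) := by
            simp only [commutatorElement_def]; group
          have e1 : k * b * k⁻¹ * b⁻¹ = 1 := by rw [hcm1]; group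
          have e2 : k * ⁅h, b⁆ * k⁻¹ = ⁅h, b⁆ := by rw [hcm2]; group
          rw [e0, e1, mul_one, e2]
        rw [e]
        exact Subgroup.commutator_mem_commutator hh hb
      calc B = ⁅(⊤ : Subgroup G), B⁆ := hB_top.symm
        _ ≤ ⁅H1, B⁆ := h1
    set B' := B.subgroupOf H1 with hB'def
    haveI hB'n : B'.Normal := hBn.subgroupOf H1
    set ψ3 : ↥H1 →* G ⧸ B := (QuotientGroup.mk' B).comp H1.subtype with hψ3
    have hrange3 : ψ3.range = Cb := by
      rw [hψ3, MonoidHom.range_comp, Subgroup.range_subtype]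
      exact Subgroup.map_comap_eq_self_of_surjective (QuotientGroup.mk'_surjective B) Cb
    have hker3 : ψ3.ker = B' := by
      rw [hψ3, ← MonoidHom.comap_ker, QuotientGroup.ker_mk']; rfl
    have hCbnil : Group.IsNilpotent ↥Cb := compl_nilpotent hK2n hK2res.1 hCb
    have hnil3 : Group.IsNilpotent (↥H1 ⧸ B') := by
      have e1 : ↥Cb ≃* ↥ψ3.range := (MulEquiv.subgroupCongr hrange3).symm
      have e2 : ↥ψ3.range ≃* (↥H1 ⧸ ψ3.ker) := (QuotientGroup.quotientKerEquivRange ψ3).symm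
      have e3 : (↥H1 ⧸ ψ3.ker) ≃* (↥H1 ⧸ B') := QuotientGroup.quotientMulEquivOfEq hker3
      exact nilp_of_mulEquiv ((e1.trans e2).trans e3) hCbnil
    have hB'res : NilpotentResidual B' hB'n := by
      constructor
      · exact hnil3
      · intro N hN hnilN
        letI := hN
        have hinj : Function.Injective H1.subtype := Subgroup.subtype_injective H1
        have hmapB' : B'.map H1.subtype = B := by
          rw [hB'def, Subgroup.subgroupOf_map_subtype, inf_eq_left.mpr hBH1]
        have hcommB' : ⁅(⊤ : Subgroup ↥H1), B'⁆ = B' := by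
          apply Subgroup.map_injective hinj
          rw [Subgroup.map_commutator, hmapB']
          have htop : (⊤ : Subgroup ↥H1).map H1.subtype = H1 := by
            rw [← MonoidHom.range_eq_map, Subgroup.range_subtype]
          rw [htop, hBH1comm]
        set Bt := B'.map (QuotientGroup.mk' N) with hBt
        have hBtcomm : ⁅(⊤ : Subgroup (↥H1 ⧸ N)), Bt⁆ = Bt := by
          have h1 : (⊤ : Subgroup ↥H1).map (QuotientGroup.mk' N) = ⊤ := by
            rw [← MonoidHom.range_eq_map]
            exact (QuotientGroup.mk' N).range_eq_top_of_surjective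
              (QuotientGroup.mk'_surjective N)
          calc ⁅(⊤ : Subgroup (↥H1 ⧸ N)), Bt⁆
              = ⁅(⊤ : Subgroup ↥H1).map (QuotientGroup.mk' N),
                  B'.map (QuotientGroup.mk' N)⁆ := by rw [h1]
            _ = (⁅(⊤ : Subgroup ↥H1), B'⁆).map (QuotientGroup.mk' N) :=
                (Subgroup.map_commutator _ _ _).symm
            _ = Bt := by rw [hcommB']
        have hBtbot : Bt = ⊥ := eq_bot_of_commutator_top_eq_self hnilN hBtcomm
        intro x hx
        have h1 : QuotientGroup.mk' N x ∈ Bt := Subgroup.mem_map_of_mem _ hx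
        rw [hBtbot, Subgroup.mem_bot] at h1
        exact mem_of_mk'_eq_one' h1
    have hB'p : IsPGroup p ↥B' := by
      rintro ⟨⟨x, hxH1⟩, hxB'⟩
      have hxB : x ∈ B := Subgroup.mem_subgroupOf.mp hxB'
      obtain ⟨_, m, hm⟩ := hxB
      refine ⟨m, ?_⟩
      apply Subtype.ext
      apply Subtype.ext
      push_cast
      exact hm
    have hab3 : ∀ x y : ↥B', x * y = y * x := by
      intro x y
      have hx : ((x : ↥H1) : G) ∈ B := Subgroup.mem_subgroupOf.mp x.2
      have hy : ((y : ↥H1) : G) ∈ B := Subgroup.mem_subgroupOf.mp y.2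
      apply Subtype.ext
      apply Subtype.ext
      push_cast
      exact habG _ (hBK hx) _ (hBK hy)
    obtain ⟨⟨C', hC'⟩, hZH1⟩ := PG ↥H1 B' hB'n hB'res hab3 p hp hB'p
    set C := C'.map H1.subtype with hCdef
    have hCH1 : C ≤ H1 := Subgroup.map_subtype_le C'
    have hKC : ∀ w ∈ K, w ∈ C → w = 1 := by
      intro w hwK hwC
      have hwB : w ∈ B := hH1K w (hCH1 hwC) hwK
      obtain ⟨c', hc', hcoe⟩ := hwC
      have hcoe' : ((c' : ↥H1) : G) = w := hcoe
      have h1 : c' ∈ B' := Subgroup.mem_subgroupOf.mpr (by rw [hcoe']; exact hwB)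
      have h2 := Subgroup.disjoint_def.mp hC'.disjoint h1 hc'
      rw [← hcoe', h2]; simp
    have hcompl : K.IsComplement' C := by
      constructor
      · rintro ⟨⟨k₁, hk₁⟩, ⟨c₁, hc₁⟩⟩ ⟨⟨k₂, hk₂⟩, ⟨c₂, hc₂⟩⟩ heq
        simp only [Prod.mk.injEq] at heq ⊢
        have heq' : k₁ * c₁ = k₂ * c₂ := heq
        have h1 : k₂⁻¹ * k₁ = c₂ * c₁⁻¹ := by
          calc k₂⁻¹ * k₁ = k₂⁻¹ * (k₁ * c₁) * c₁⁻¹ := by group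
            _ = k₂⁻¹ * (k₂ * c₂) * c₁⁻¹ := by rw [heq']
            _ = c₂ * c₁⁻¹ := by group
        have h2 : k₂⁻¹ * k₁ ∈ K := K.mul_mem (K.inv_mem hk₂) hk₁
        have h3 : k₂⁻¹ * k₁ ∈ C := h1 ▸ C.mul_mem hc₂ (C.inv_mem hc₁)
        have h4 := hKC _ h2 h3
        have hkk : k₂ = k₁ := inv_mul_eq_one.mp h4
        have h5 : c₂ * c₁⁻¹ = 1 := h1 ▸ h4
        have hcc : c₂ = c₁ := mul_inv_eq_one.mp h5
        exact ⟨Subtype.ext hkk.symm, Subtype.ext hcc.symm⟩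
      · intro g
        obtain ⟨k, hkK, h, hh, rfl⟩ := hGKH1 g
        obtain ⟨⟨⟨b', hb'⟩, ⟨c', hc'⟩⟩, hbc⟩ := hC'.2 (⟨h, hh⟩ : ↥H1)
        have hb'B : (b' : G) ∈ B := Subgroup.mem_subgroupOf.mp hb'
        have hbcG : (b' : G) * (c' : G) = h := by
          have h9 := congrArg (fun z : ↥H1 => (z : G)) hbc
          simpa using h9
        refine ⟨⟨⟨k * (b' : G), K.mul_mem hkK (hBK hb'B)⟩,
          ⟨(c' : G), Subgroup.mem_map_of_mem _ hc'⟩⟩, ?_⟩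
        show k * (b' : G) * (c' : G) = k * h
        rw [mul_assoc, hbcG]
    refine ⟨⟨C, hcompl⟩, ?_⟩
    rw [eq_bot_iff]
    rintro w ⟨hwK, hwZ⟩
    rw [Subgroup.mem_bot]
    have h1 : QuotientGroup.mk' B w ∈ K2 ⊓ Subgroup.center (G ⧸ B) := by
      refine Subgroup.mem_inf.mpr ⟨Subgroup.mem_map_of_mem _ hwK, Subgroup.mem_center_iff.mpr ?_⟩
      intro q
      obtain ⟨g, rfl⟩ := QuotientGroup.mk'_surjective B q
      rw [← map_mul, ← map_mul, Subgroup.mem_center_iff.mp hwZ g]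
    rw [hZb] at h1
    have hwB : w ∈ B := mem_of_mk'_eq_one' (Subgroup.mem_bot.mp h1)
    have h3 : (⟨w, hBH1 hwB⟩ : ↥H1) ∈ B' ⊓ Subgroup.center ↥H1 := by
      refine Subgroup.mem_inf.mpr ⟨Subgroup.mem_subgroupOf.mpr hwB, Subgroup.mem_center_iff.mpr ?_⟩
      intro u
      apply Subtype.ext
      push_cast
      exact Subgroup.mem_center_iff.mp hwZ ↑u
    rw [hZH1] at h3
    exact Subtype.ext_iff.mp (Subgroup.mem_bot.mp h3)

end CarterAux

theorem stmt0 (G : Type) [Group G] [Fintype G] (hsol : IsSolvable G)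
    (K : Subgroup G) (hKn : K.Normal) (hK : NilpotentResidual K hKn)
    (hab : ∀ x y : ↥K, x * y = y * x) :
    (∃ C : Subgroup G, K.IsComplement' C) ∧
      ∀ C : Subgroup G, K.IsComplement' C → IsCarter C := by
  obtain ⟨hex, hZ⟩ := CarterAux.MAIN (Nat.card ↥K) G K hKn hK hab le_rfl
  refine ⟨hex, ?_⟩
  intro C hC
  letI := hKn
  have habG : ∀ x ∈ K, ∀ y ∈ K, x * y = y * x := fun x hx y hy =>
    Subtype.ext_iff.mp (hab ⟨x, hx⟩ ⟨y, hy⟩)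
  constructor
  · exact CarterAux.compl_nilpotent hKn hK.1 hC
  · refine le_antisymm ?_ Subgroup.le_normalizer
    intro x hx
    obtain ⟨⟨⟨k, hk⟩, ⟨c, hc⟩⟩, hkc⟩ := hC.2 x
    have hkc' : k * c = x := hkc
    have hkN : k ∈ Subgroup.normalizer (C : Set G) := by
      have hke : k = x * c⁻¹ := by rw [← hkc']; group
      rw [hke]
      exact (Subgroup.normalizer (C : Set G)).mul_mem hx ((Subgroup.normalizer (C : Set G)).inv_mem (Subgroup.le_normalizer hc))
    have hkcentral : k ∈ Subgroup.center G := by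
      rw [Subgroup.mem_center_iff]
      intro g
      obtain ⟨⟨⟨k₂, hk₂⟩, ⟨c₂, hc₂⟩⟩, hg⟩ := hC.2 g
      have hg' : k₂ * c₂ = g := hg
      have h1 : k * c₂ * k⁻¹ ∈ C := (Subgroup.mem_normalizer_iff.mp hkN c₂).mp hc₂
      have h2 : ⁅k, c₂⁆ ∈ C := by
        have e : ⁅k, c₂⁆ = (k * c₂ * k⁻¹) * c₂⁻¹ := by group
        rw [e]; exact C.mul_mem h1 (C.inv_mem hc₂)
      have h3 : ⁅k, c₂⁆ ∈ K := by
        have e : ⁅k, c₂⁆ = k * (c₂ * k⁻¹ * c₂⁻¹) := by group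
        rw [e]; exact K.mul_mem hk (hKn.conj_mem k⁻¹ (K.inv_mem hk) c₂)
      have h4 : ⁅k, c₂⁆ = 1 := Subgroup.disjoint_def.mp hC.disjoint h3 h2
      have hcomm2 : Commute k c₂ := commutatorElement_eq_one_iff_commute.mp h4
      have hcomm1 : k * k₂ = k₂ * k := habG k hk k₂ hk₂
      rw [← hg']
      calc k₂ * c₂ * k = k₂ * (k * c₂) := by rw [mul_assoc, ← hcomm2.eq]
        _ = (k * k₂) * c₂ := by rw [← mul_assoc, ← hcomm1]
        _ = k * (k₂ * c₂) := by rw [mul_assoc]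
    have hk1 : k = 1 := by
      have hmem : k ∈ K ⊓ Subgroup.center G := Subgroup.mem_inf.mpr ⟨hk, hkcentral⟩
      rw [hZ] at hmem
      exact Subgroup.mem_bot.mp hmem
    rw [← hkc', hk1, one_mul]
    exact hc
end
end

section
/- Let G be a finite solvable group, C a Carter subgroup of G, and K the smallest normal subgroup of G such that G/K is nilpotent. Then G = KC. -/
noncomputable section
open scoped Classical

variable {G : Type}

namespace CarterAux

variable {G : Type} [Group G]

/-- conjugate subgroup -/
def conjSub (g : G) (H : Subgroup G) : Subgroup G :=
  H.map (MulAut.conj g).toMonoidHom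

lemma mem_conjSub {g x : G} {H : Subgroup G} :
    x ∈ conjSub g H ↔ ∃ y ∈ H, g * y * g⁻¹ = x := by
  simp [conjSub, Subgroup.mem_map, MulAut.conj]

lemma mem_conjSub' {g x : G} {H : Subgroup G} :
    x ∈ conjSub g H ↔ g⁻¹ * x * g ∈ H := by
  rw [mem_conjSub]
  constructor
  · rintro ⟨y, hy, rfl⟩; group; simpa using hy
  · intro h; exact ⟨g⁻¹ * x * g, h, by group⟩

lemma conjSub_one (H : Subgroup G) : conjSub 1 H = H := by
  ext x; simp [mem_conjSub']

lemma conjSub_conjSub (a b : G) (H : Subgroup G) :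
    conjSub a (conjSub b H) = conjSub (a * b) H := by
  have key : ∀ x : G, (a * b)⁻¹ * x * (a * b) = b⁻¹ * (a⁻¹ * x * a) * b := by
    intro x; group
  ext x; rw [mem_conjSub', mem_conjSub', mem_conjSub', key]

lemma conjSub_le_conjSub {a : G} {H K : Subgroup G} (h : H ≤ K) :
    conjSub a H ≤ conjSub a K := by
  intro x hx; rw [mem_conjSub'] at hx ⊢; exact h hx

lemma conjSub_of_mem_normalizer {g : G} {H : Subgroup G} (h : g ∈ Subgroup.normalizer (H : Set G)) :
    conjSub g H = H := by
  ext x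
  rw [mem_conjSub']
  rw [Subgroup.mem_normalizer_iff] at h
  have key : g * (g⁻¹ * x * g) * g⁻¹ = x := by group
  constructor
  · intro hx
    have := (h (g⁻¹ * x * g)).mp hx
    rwa [key] at this
  · intro hx
    exact (h (g⁻¹ * x * g)).mpr (by rwa [key])

lemma mem_normalizer_of_conjSub {g : G} {H : Subgroup G} (h : conjSub g H = H) :
    g ∈ Subgroup.normalizer (H : Set G) := by
  rw [Subgroup.mem_normalizer_iff]
  intro x
  have key : g⁻¹ * (g * x * g⁻¹) * g = x := by group
  constructor
  · intro hx
    rw [← h, mem_conjSub', key]; exact hx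
  · intro hx
    rw [← h, mem_conjSub', key] at hx; exact hx

lemma conjSub_of_normal {g : G} {H : Subgroup G} (h : H.Normal) : conjSub g H = H :=
  conjSub_of_mem_normalizer (by rw [Subgroup.normalizer_eq_top_iff.mpr h]; trivial)

/-- conjSub commutes with map along any hom -/
lemma map_conjSub {G' : Type} [Group G'] (f : G →* G') (g : G) (H : Subgroup G) :
    (conjSub g H).map f = conjSub (f g) (H.map f) := by
  ext x
  simp only [Subgroup.mem_map, mem_conjSub]
  constructor
  · rintro ⟨y, hy, rfl⟩
    rcases mem_conjSub.mp hy with ⟨z, hz, rfl⟩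
    exact ⟨f z, ⟨z, hz, rfl⟩, by simp [mul_assoc]⟩
  · rintro ⟨y, ⟨z, hz, rfl⟩, rfl⟩
    exact ⟨g * z * g⁻¹, mem_conjSub.mpr ⟨z, hz, rfl⟩, by simp [mul_assoc]⟩

lemma conjSub_sup (g : G) (H K : Subgroup G) :
    conjSub g (H ⊔ K) = conjSub g H ⊔ conjSub g K := by
  simp only [conjSub]
  exact Subgroup.map_sup _ _ _

end CarterAux

namespace CarterAux

variable {G : Type} [Group G]

lemma carter_eq_top_of_nilpotent [Group.IsNilpotent G] {C : Subgroup G}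
    (hC : Subgroup.normalizer (C : Set G) = C) : C = ⊤ :=
  (normalizerCondition_iff_only_full_group_self_normalizing.mp
    normalizerCondition_of_isNilpotent) C hC

lemma normalizer_subgroupOf_eq {C D : Subgroup G} (hle : C ≤ D)
    (hN : Subgroup.normalizer (C : Set G) = C) :
    Subgroup.normalizer ((C.subgroupOf D : Subgroup ↥D) : Set ↥D) = C.subgroupOf D := by
  refine le_antisymm ?_ Subgroup.le_normalizer
  intro x hx
  rw [Subgroup.mem_normalizer_iff] at hx
  have hxC : (x : G) ∈ Subgroup.normalizer (C : Set G) := by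
    rw [Subgroup.mem_normalizer_iff]
    intro z
    constructor
    · intro hz
      have hzD : z ∈ D := hle hz
      have := (hx ⟨z, hzD⟩).mp (by simpa [Subgroup.mem_subgroupOf] using hz)
      simpa [Subgroup.mem_subgroupOf] using this
    · intro hz
      have hzD : z ∈ D := by
        have h1 : (x : G) * z * (x : G)⁻¹ ∈ D := hle hz
        have h2 : (x : G)⁻¹ * ((x : G) * z * (x : G)⁻¹) * (x : G) = z := by group
        rw [← h2]
        exact Subgroup.mul_mem _ (Subgroup.mul_mem _ (Subgroup.inv_mem _ x.2) h1) x.2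
      have := (hx ⟨z, hzD⟩).mpr (by simpa [Subgroup.mem_subgroupOf] using hz)
      simpa [Subgroup.mem_subgroupOf] using this
  rw [hN] at hxC
  simpa [Subgroup.mem_subgroupOf] using hxC

lemma carter_eq_of_le_nilpotent {C D : Subgroup G} (hle : C ≤ D)
    (hN : Subgroup.normalizer (C : Set G) = C) (hD : Group.IsNilpotent ↥D) : C = D := by
  haveI := hD
  have h := carter_eq_top_of_nilpotent (normalizer_subgroupOf_eq hle hN)
  have h2 := congrArg (Subgroup.map D.subtype) h
  rwa [Subgroup.subgroupOf_map_subtype, inf_eq_left.mpr hle,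
    ← MonoidHom.range_eq_map, D.range_subtype] at h2

lemma isCarter_conjSub {C : Subgroup G} (hC : IsCarter C) (g : G) :
    IsCarter (conjSub g C) := by
  constructor
  · haveI := hC.1
    exact nilpotent_of_mulEquiv ((MulAut.conj g : G ≃* G).subgroupMap C)
  · have := Subgroup.map_equiv_normalizer_eq C (MulAut.conj g : G ≃* G)
    rw [hC.2] at this
    exact this.symm ▸ rfl

lemma isCarter_subgroupOf {C H : Subgroup G} (hC : IsCarter C) (hle : C ≤ H) :
    IsCarter (C.subgroupOf H) := by
  constructor
  · haveI := hC.1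
    exact nilpotent_of_mulEquiv (Subgroup.subgroupOfEquivOfLe hle).symm
  · exact normalizer_subgroupOf_eq hle hC.2

lemma conjSub_subgroupOf_push {L C C2 : Subgroup G} (hCL : C ≤ L) (hC2L : C2 ≤ L)
    (h : ↥L) (heq : conjSub h (C.subgroupOf L) = C2.subgroupOf L) :
    conjSub (h : G) C = C2 := by
  have := congrArg (Subgroup.map L.subtype) heq
  rw [map_conjSub, Subgroup.subgroupOf_map_subtype, Subgroup.subgroupOf_map_subtype,
    inf_eq_left.mpr hCL, inf_eq_left.mpr hC2L] at this
  exact this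

end CarterAux

namespace CarterAux

variable {G : Type} [Group G]

/-- existence of a minimal nontrivial normal subgroup -/
lemma exists_minimal_normal [Finite G] (h : Nontrivial G) :
    ∃ N : Subgroup G, N.Normal ∧ N ≠ ⊥ ∧
      ∀ W : Subgroup G, W.Normal → W ≤ N → W ≠ ⊥ → W = N := by
  have hex : ∃ m : ℕ, ∃ N : Subgroup G, N.Normal ∧ N ≠ ⊥ ∧ Nat.card ↥N = m :=
    ⟨Nat.card ↥(⊤ : Subgroup G), ⊤, inferInstance, by
      intro hbot
      have hall := Subgroup.eq_bot_iff_forall _ |>.mp hbot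
      obtain ⟨x, y, hxy⟩ := h
      exact hxy ((hall x trivial).trans (hall y trivial).symm), rfl⟩
  classical
  obtain ⟨N, hNn, hNb, hNc⟩ := Nat.find_spec hex
  refine ⟨N, hNn, hNb, fun W hWn hWle hWb => ?_⟩
  have h1 : Nat.find hex ≤ Nat.card ↥W := Nat.find_min' hex ⟨W, hWn, hWb, rfl⟩
  have h2 : Nat.card ↥W ≤ Nat.card ↥N := Subgroup.card_le_of_le hWle
  refine Subgroup.eq_of_le_of_card_ge hWle ?_
  omega

end CarterAux

namespace CarterAux

variable {G : Type} [Group G]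

lemma commutator_ne_top_solvable (H : Type) [Group H] [Group.IsSolvable H] [Nontrivial H] :
    commutator H ≠ ⊤ := by
  intro htop
  have hall : ∀ n, derivedSeries H n = ⊤ := by
    intro n
    induction n with
    | zero => rfl
    | succ n ih => rw [derivedSeries_succ, ih]; exact htop
  obtain ⟨⟨n, hn⟩⟩ := ‹Group.IsSolvable H›
  rw [hall n] at hn
  obtain ⟨x, y, hxy⟩ := exists_pair_ne H
  exact hxy ((Subgroup.eq_bot_iff_forall _ |>.mp hn x trivial).trans
    (Subgroup.eq_bot_iff_forall _ |>.mp hn y trivial).symm)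

lemma minimal_normal_abelian [Finite G] [Group.IsSolvable G] {N : Subgroup G}
    (hNn : N.Normal) (hNb : N ≠ ⊥)
    (hmin : ∀ W : Subgroup G, W.Normal → W ≤ N → W ≠ ⊥ → W = N) :
    ∀ a ∈ N, ∀ b ∈ N, a * b = b * a := by
  haveI := hNn
  have hD : (⁅N, N⁆ : Subgroup G) ≠ N := by
    intro hEq
    haveI : Nontrivial ↥N := (Subgroup.nontrivial_iff_ne_bot N).mpr hNb
    apply commutator_ne_top_solvable ↥N
    apply Subgroup.map_injective N.subtype_injective
    rw [commutator, Subgroup.map_commutator, ← MonoidHom.range_eq_map, N.range_subtype, hEq]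
  have hDbot : (⁅N, N⁆ : Subgroup G) = ⊥ := by
    by_contra hne
    exact hD (hmin _ (Subgroup.commutator_normal N N) (Subgroup.commutator_le_right N N) hne)
  have hle := Subgroup.commutator_eq_bot_iff_le_centralizer.mp hDbot
  intro a ha b hb
  exact (Subgroup.mem_centralizer_iff.mp (hle ha) b hb).symm

lemma minimal_normal_pgroup [Finite G]
    {N : Subgroup G}
    (hab : ∀ a ∈ N, ∀ b ∈ N, a * b = b * a)
    (hNn : N.Normal) (hNb : N ≠ ⊥)
    (hmin : ∀ W : Subgroup G, W.Normal → W ≤ N → W ≠ ⊥ → W = N) :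
    ∃ p : ℕ, Nat.Prime p ∧ IsPGroup p ↥N := by
  have hcard : 1 < Nat.card ↥N := (Subgroup.one_lt_card_iff_ne_bot N).mpr hNb
  set p := (Nat.card ↥N).minFac with hp
  have hprime : Nat.Prime p := Nat.minFac_prime (by omega)
  haveI : Fact (Nat.Prime p) := ⟨hprime⟩
  haveI : Fintype ↥N := Fintype.ofFinite ↥N
  obtain ⟨x, hx⟩ := exists_prime_orderOf_dvd_card (G := ↥N) p
    (by rw [← Nat.card_eq_fintype_card]; exact Nat.minFac_dvd _)
  refine ⟨p, hprime, ?_⟩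
  let T : Subgroup G :=
    { carrier := {g | g ∈ N ∧ g ^ p = 1}
      one_mem' := ⟨N.one_mem, one_pow p⟩
      mul_mem' := by
        rintro a b ⟨haN, hap⟩ ⟨hbN, hbp⟩
        exact ⟨N.mul_mem haN hbN, by
          rw [Commute.mul_pow (hab a haN b hbN), hap, hbp, one_mul]⟩
      inv_mem' := by
        rintro a ⟨haN, hap⟩
        exact ⟨N.inv_mem haN, by rw [inv_pow, hap, inv_one]⟩ }
  have hTn : T.Normal := by
    constructor
    rintro a ⟨haN, hap⟩ g
    refine ⟨hNn.conj_mem a haN g, ?_⟩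
    have : (g * a * g⁻¹) ^ p = g * a ^ p * g⁻¹ := by
      induction p with
      | zero => simp
      | succ k ih => rw [pow_succ, pow_succ, ih]; group
    rw [this, hap]; group
  have hTN : T = N := by
    apply hmin T hTn (fun g hg => hg.1)
    intro hbot
    have hxT : (x : G) ∈ T := ⟨x.2, by
      have h1 : x ^ p = 1 := by rw [← hx]; exact pow_orderOf_eq_one x
      exact_mod_cast h1⟩
    rw [hbot] at hxT
    have : x = 1 := by exact_mod_cast (Subgroup.mem_bot.mp hxT)
    rw [this] at hx
    simp at hx
    exact hprime.ne_one hx.symm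
  intro g
  refine ⟨1, ?_⟩
  have hg : (g : G) ∈ T := hTN.symm ▸ g.2
  rw [pow_one]
  exact_mod_cast hg.2

end CarterAux

namespace CarterAux

variable {G : Type} [Group G]

lemma p_not_dvd_card_carter [Finite G] {p : ℕ} (hp : Nat.Prime p)
    {N C : Subgroup G} (hNn : N.Normal) (hNb : N ≠ ⊥)
    (hab : ∀ a ∈ N, ∀ b ∈ N, a * b = b * a)
    (hNp : IsPGroup p ↥N)
    (hmin : ∀ W : Subgroup G, W.Normal → W ≤ N → W ≠ ⊥ → W = N)
    (hCnil : Group.IsNilpotent ↥C)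
    (hsup : N ⊔ C = ⊤)
    (hinf : C ⊓ N = ⊥)
    (hcent : Subgroup.centralizer (N : Set G) ≤ N) :
    ¬ p ∣ Nat.card ↥C := by
  haveI : Fact (Nat.Prime p) := ⟨hp⟩
  intro hdvd
  haveI := hCnil
  obtain ⟨P₀⟩ : Nonempty (Sylow p ↥C) := inferInstance
  have h04 : Group.IsNilpotent ↥C ↔
      ∀ (q : ℕ) (_hq : Fact q.Prime) (Q : Sylow q ↥C), (↑Q : Subgroup ↥C).Normal :=
    (isNilpotent_of_finite_tfae (G := ↥C)).out 0 3
  have hP₀norm : (↑P₀ : Subgroup ↥C).Normal := h04.mp hCnil p ⟨hp⟩ P₀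
  set P : Subgroup G := (↑P₀ : Subgroup ↥C).map C.subtype with hPdef
  have hPle : P ≤ C := by
    rintro x ⟨y, _, rfl⟩
    exact y.2
  have hPp : IsPGroup p ↥P := P₀.isPGroup'.map C.subtype
  have hPcard : 1 < Nat.card ↥P := by
    have hinj : Function.Injective C.subtype := C.subtype_injective
    have : Nat.card ↥P = Nat.card ↥(↑P₀ : Subgroup ↥C) :=
      (Nat.card_congr (Subgroup.equivMapOfInjective _ _ hinj).toEquiv).symm
    rw [this, Sylow.card_eq_multiplicity]
    have hpos : 0 < (Nat.card ↥C).factorization p :=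
      hp.factorization_pos_of_dvd (Nat.card_pos).ne' hdvd
    calc 1 < p := hp.one_lt
    _ ≤ p ^ (Nat.card ↥C).factorization p := Nat.le_self_pow hpos.ne' p
  have hPne : P ≠ ⊥ := by
    intro h
    rw [h] at hPcard
    simp [Nat.card_eq_fintype_card] at hPcard
  -- conjugation of P by elements of C
  have hPconj : ∀ c ∈ C, ∀ x ∈ P, c * x * c⁻¹ ∈ P := by
    intro c hc x hx
    obtain ⟨y, hy, rfl⟩ := hx
    have : (⟨c, hc⟩ : ↥C) * y * (⟨c, hc⟩ : ↥C)⁻¹ ∈ (↑P₀ : Subgroup ↥C) :=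
      hP₀norm.conj_mem y hy _
    exact ⟨_, this, rfl⟩
  set W : Subgroup G := N ⊓ Subgroup.centralizer (P : Set G) with hWdef
  have hWle : W ≤ N := inf_le_left
  have hWn : W.Normal := by
    rw [← Subgroup.normalizer_eq_top_iff]
    rw [eq_top_iff, ← hsup, sup_le_iff]
    constructor
    · -- N normalizes W
      intro n hn
      have key : ∀ h ∈ N, n * h * n⁻¹ = h := by
        intro h hh
        rw [hab n hn h hh]
        group
      rw [Subgroup.mem_normalizer_iff]
      intro h
      simp only [hWdef, Subgroup.mem_inf]
      constructor
      · rintro ⟨hhN, hhC⟩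
        rw [key h hhN]; exact ⟨hhN, hhC⟩
      · intro hmem
        have hhN : h ∈ N := by
          have h2 := hNn.conj_mem _ hmem.1 n⁻¹
          have h3 : n⁻¹ * (n * h * n⁻¹) * n⁻¹⁻¹ = h := by group
          rwa [h3] at h2
        rwa [key h hhN] at hmem
    · -- C normalizes W
      intro c hc
      rw [Subgroup.mem_normalizer_iff]
      intro h
      simp only [hWdef, Subgroup.mem_inf]
      constructor
      · rintro ⟨hhN, hhC⟩
        refine ⟨hNn.conj_mem h hhN c, ?_⟩
        rw [Subgroup.mem_centralizer_iff]
        intro x hx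
        have hx' : c⁻¹ * x * c ∈ P := by
          have := hPconj c⁻¹ (C.inv_mem hc) x hx
          simpa using this
        have hcomm := Subgroup.mem_centralizer_iff.mp hhC _ hx'
        -- (c⁻¹ x c) h = h (c⁻¹ x c)  ⇒ x (c h c⁻¹) = (c h c⁻¹) x
        have := congrArg (fun z => c * z * c⁻¹) hcomm
        simpa [mul_assoc] using this
      · intro hmem
        obtain ⟨hhN', hhC'⟩ := hmem
        have hhN : h ∈ N := by
          have h2 := hNn.conj_mem _ hhN' c⁻¹
          simpa [mul_assoc] using h2
        refine ⟨hhN, ?_⟩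
        rw [Subgroup.mem_centralizer_iff]
        intro x hx
        have hx' : c * x * c⁻¹ ∈ P := hPconj c hc x hx
        have hcomm := Subgroup.mem_centralizer_iff.mp hhC' _ hx'
        -- (c x c⁻¹)(c h c⁻¹) = (c h c⁻¹)(c x c⁻¹)
        have := congrArg (fun z => c⁻¹ * z * c) hcomm
        simpa [mul_assoc] using this
  have hWne : W ≠ ⊥ := by
    -- fixed point argument
    letI : MulAction ↥P ↥N :=
      { smul := fun g n => ⟨(g : G) * n * (g : G)⁻¹, hNn.conj_mem n n.2 g⟩
        one_smul := fun n => Subtype.ext (show ((1 : ↥P) : G) * n * ((1 : ↥P) : G)⁻¹ = n by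
          simp)
        mul_smul := fun g h n => Subtype.ext (show ((g * h : ↥P) : G) * n * ((g * h : ↥P) : G)⁻¹
            = (g : G) * ((h : G) * n * (h : G)⁻¹) * (g : G)⁻¹ by
          push_cast
          group) }
    have hsmul_def : ∀ (g : ↥P) (n : ↥N), (↑(g • n) : G) = g * n * (g : G)⁻¹ :=
      fun g n => rfl
    have hone : (1 : ↥N) ∈ MulAction.fixedPoints ↥P ↥N := by
      rw [MulAction.mem_fixedPoints]
      intro g; ext; rw [hsmul_def]; simp
    have hcardN : p ∣ Nat.card ↥N := by
      obtain ⟨k, hk⟩ := (IsPGroup.iff_card).mp hNp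
      rcases Nat.eq_zero_or_pos k with h0 | hpos
      · rw [h0, pow_zero] at hk
        exact absurd hk (((Subgroup.one_lt_card_iff_ne_bot N).mpr hNb).ne')
      · rw [hk]; exact dvd_pow_self p hpos.ne'
    obtain ⟨b, hbfix, hbne⟩ :=
      hPp.exists_fixed_point_of_prime_dvd_card_of_fixed_point ↥N hcardN hone
    intro hbot
    apply hbne
    have hbW : (b : G) ∈ W := by
      rw [hWdef, Subgroup.mem_inf]
      refine ⟨b.2, ?_⟩
      rw [Subgroup.mem_centralizer_iff]
      intro x hx
      have := MulAction.mem_fixedPoints.mp hbfix ⟨x, hx⟩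
      have hxb : x * b * x⁻¹ = (b : G) := by
        rw [← hsmul_def ⟨x, hx⟩ b, this]
      calc x * (b : G) = (x * b * x⁻¹) * x := by group
      _ = b * x := by rw [hxb]
    rw [hbot, Subgroup.mem_bot] at hbW
    ext; simp [hbW]
  have hWN := hmin W hWn hWle hWne
  -- P centralizes N
  have hPN : P ≤ N := by
    refine le_trans ?_ hcent
    intro x hx
    rw [Subgroup.mem_centralizer_iff]
    intro n hn
    have hnW : n ∈ W := hWN.symm ▸ hn
    rw [hWdef, Subgroup.mem_inf] at hnW
    exact (Subgroup.mem_centralizer_iff.mp hnW.2 x hx).symm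
  have : P ≤ C ⊓ N := le_inf hPle hPN
  rw [hinf] at this
  exact hPne (le_bot_iff.mp this)

end CarterAux

namespace CarterAux

open MulOpposite MulAction Pointwise

variable {G : Type} [Group G]

lemma conj_of_complements [Finite G] {N C1 C2 : Subgroup G} (hNn : N.Normal)
    (hab : ∀ a ∈ N, ∀ b ∈ N, a * b = b * a)
    (hco : Nat.Coprime (Nat.card ↥N) N.index)
    (h1 : N.IsComplement' C1) (h2 : N.IsComplement' C2) :
    ∃ g : G, conjSub g C1 = C2 := by
  haveI := hNn
  haveI : IsMulCommutative N := ⟨⟨fun a b => Subtype.ext (hab a a.2 b b.2)⟩⟩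
  haveI : N.FiniteIndex := ⟨Subgroup.index_ne_zero_of_finite⟩
  -- each complement gives a point of QuotientDiff, whose stabilizer it is
  have key : ∀ K : Subgroup G, (hK : N.IsComplement' K) →
      ∃ α : N.QuotientDiff, K = stabilizer G α := by
    intro K hK
    have hKT : Subgroup.IsComplement (K : Set G) (N : Set G) := hK.symm
    set T : N.LeftTransversal := ⟨(K : Set G), hKT⟩ with hT
    set α : N.QuotientDiff := Quotient.mk'' T with hα
    refine ⟨α, ?_⟩
    have hstab : N.IsComplement' (stabilizer G α) :=
      Subgroup.isComplement'_stabilizer_of_coprime hco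
    have hle : K ≤ stabilizer G α := by
      intro k hk
      rw [MulAction.mem_stabilizer_iff]
      show Quotient.map' _ _ (Quotient.mk'' T) = Quotient.mk'' T
      rw [Quotient.map'_mk'']
      congr 1
      apply Subtype.ext
      show op k⁻¹ • (K : Set G) = (K : Set G)
      ext x
      constructor
      · rintro ⟨y, hy, rfl⟩
        exact K.mul_mem hy (K.inv_mem hk)
      · intro hx
        exact ⟨x * k, K.mul_mem hx hk, by
          show (x * k) * k⁻¹ = x
          group⟩
    have hcard : Nat.card ↥(stabilizer G α) ≤ Nat.card ↥K := by
      have e1 : Nat.card ↥K = N.index := (hK.symm.index_eq_card).symm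
      have e2 : Nat.card ↥(stabilizer G α) = N.index := (hstab.symm.index_eq_card).symm
      rw [e1, e2]
    exact Subgroup.eq_of_le_of_card_ge hle hcard
  obtain ⟨α1, hα1⟩ := key C1 h1
  obtain ⟨α2, hα2⟩ := key C2 h2
  obtain ⟨h, hh⟩ := Subgroup.exists_smul_eq hco α1 α2
  refine ⟨(h : G), ?_⟩
  have hsmul : (h : G) • α1 = α2 := hh
  rw [hα2, ← hsmul, MulAction.stabilizer_smul_eq_stabilizer_map_conj, ← hα1]
  rfl

end CarterAux

namespace CarterAux

variable {G : Type} [Group G]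

lemma card_lt_of_ne_top [Finite G] {H : Subgroup G} (h : H ≠ ⊤) :
    Nat.card ↥H < Nat.card G := by
  have h1 : Nat.card ↥H ≤ Nat.card ↥(⊤ : Subgroup G) := Subgroup.card_le_of_le le_top
  have h2 : Nat.card ↥(⊤ : Subgroup G) = Nat.card G :=
    Nat.card_congr Subgroup.topEquiv.toEquiv
  rcases lt_or_eq_of_le (h1.trans h2.le) with hlt | heq
  · exact hlt
  · exact absurd (Subgroup.eq_of_le_of_card_ge le_top (h2.trans heq.symm).le) h

lemma card_quotient_lt [Finite G] {N : Subgroup G} (hN : N.Normal) (hb : N ≠ ⊥) :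
    Nat.card (G ⧸ N) < Nat.card G := by
  have h1 : Nat.card G = Nat.card (G ⧸ N) * Nat.card ↥N :=
    Subgroup.card_eq_card_quotient_mul_card_subgroup N
  have h2 : 1 < Nat.card ↥N := (Subgroup.one_lt_card_iff_ne_bot N).mpr hb
  have h3 : 0 < Nat.card (G ⧸ N) := Nat.card_pos
  calc Nat.card (G ⧸ N) = Nat.card (G ⧸ N) * 1 := (mul_one _).symm
  _ < Nat.card (G ⧸ N) * Nat.card ↥N := by exact (mul_lt_mul_iff_right₀ h3).mpr h2
  _ = Nat.card G := h1.symm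

lemma map_mk'_self {E : Subgroup G} (hE : E.Normal) :
    letI := hE
    E.map (QuotientGroup.mk' E) = ⊥ := by
  letI := hE
  rw [eq_bot_iff]
  rintro x ⟨y, hy, rfl⟩
  rw [Subgroup.mem_bot]
  exact (QuotientGroup.eq_one_iff y).mpr hy

lemma isCarter_map_quotient [Finite G] (hsol : IsSolvable G)
    (IH : ∀ (H : Type) [Group H] [Finite H], Nat.card H < Nat.card G → IsSolvable H →
        ∀ D1 D2 : Subgroup H, IsCarter D1 → IsCarter D2 → ∃ h : H, conjSub h D1 = D2)
    (E : Subgroup G) (hE : E.Normal) {C : Subgroup G} (hC : IsCarter C) :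
    letI := hE
    IsCarter (C.map (QuotientGroup.mk' E)) := by
  letI := hE
  set π := QuotientGroup.mk' E with hπ
  have hπsurj : Function.Surjective π := QuotientGroup.mk'_surjective E
  constructor
  · haveI := hC.1
    exact nilpotent_of_surjective (π.subgroupMap C) (π.subgroupMap_surjective C)
  · refine le_antisymm ?_ Subgroup.le_normalizer
    intro xb hxb
    obtain ⟨x, rfl⟩ := hπsurj xb
    have hmapL : (C ⊔ E).map π = C.map π := by
      rw [Subgroup.map_sup, map_mk'_self hE, sup_bot_eq]
    by_cases hL : C ⊔ E = ⊤
    · have : C.map π = ⊤ := by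
        rw [← hmapL, hL, Subgroup.map_top_of_surjective _ hπsurj]
      rw [this]
      trivial
    · -- x normalizes C ⊔ E
      have hkerle : π.ker ≤ C ⊔ E := by
        rw [QuotientGroup.ker_mk']; exact le_sup_right
      have hconjL : conjSub x (C ⊔ E) = C ⊔ E := by
        apply Subgroup.map_injective_of_ker_le π ?_ hkerle
        · rw [map_conjSub, hmapL, conjSub_of_mem_normalizer hxb]
        rw [QuotientGroup.ker_mk']
        calc E = conjSub x E := (conjSub_of_normal hE).symm
        _ ≤ conjSub x (C ⊔ E) := conjSub_le_conjSub le_sup_right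
      set L := C ⊔ E with hLdef
      have hCL : C ≤ L := le_sup_left
      have hC'L : conjSub x C ≤ L := by
        rw [← hconjL]; exact conjSub_le_conjSub hCL
      obtain ⟨h, hh⟩ := IH ↥L (card_lt_of_ne_top hL) (show Group.IsSolvable _ from haveI : Group.IsSolvable G := hsol; inferInstance)
        (C.subgroupOf L) ((conjSub x C).subgroupOf L)
        (isCarter_subgroupOf hC hCL)
        (isCarter_subgroupOf (isCarter_conjSub hC x) hC'L)
      have hpush : conjSub (h : G) C = conjSub x C :=
        conjSub_subgroupOf_push hCL hC'L h hh
      have hmem : (h : G)⁻¹ * x ∈ C := by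
        have : conjSub ((h : G)⁻¹ * x) C = C := by
          rw [← conjSub_conjSub, ← hpush, conjSub_conjSub, inv_mul_cancel, conjSub_one]
        have := mem_normalizer_of_conjSub this
        rwa [hC.2] at this
      have hxL : x ∈ L := by
        have : x = (h : G) * ((h : G)⁻¹ * x) := by group
        rw [this]
        exact L.mul_mem h.2 (hCL hmem)
      rw [← hmapL]
      exact ⟨x, hxL, rfl⟩

end CarterAux

namespace CarterAux

open Pointwise in
theorem carter_conj : ∀ (n : ℕ) (G : Type) [Group G] [Finite G], Nat.card G ≤ n →
    IsSolvable G → ∀ C1 C2 : Subgroup G, IsCarter C1 → IsCarter C2 →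
    ∃ g : G, conjSub g C1 = C2 := by
  intro n
  induction n with
  | zero =>
    intro G _ _ hcard
    have := Nat.card_pos (α := G)
    omega
  | succ n IH =>
    intro G _ _ hcard hsol C1 C2 hC1 hC2
    have IH' : ∀ (H : Type) [Group H] [Finite H], Nat.card H < Nat.card G → IsSolvable H →
        ∀ D1 D2 : Subgroup H, IsCarter D1 → IsCarter D2 → ∃ h : H, conjSub h D1 = D2 := by
      intro H _ _ hlt
      exact IH H (by omega)
    by_cases hnil : Group.IsNilpotent G
    · refine ⟨1, ?_⟩
      rw [conjSub_one, carter_eq_top_of_nilpotent hC1.2, carter_eq_top_of_nilpotent hC2.2]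
    have hnt : Nontrivial G := by
      by_contra hc
      rw [not_nontrivial_iff_subsingleton] at hc
      refine hnil ⟨0, ?_⟩
      rw [upperCentralSeries_zero]
      ext x
      simp [Subgroup.mem_bot, Subsingleton.elim x 1]
    have hCtop_contra : ∀ C : Subgroup G, IsCarter C → C ≠ ⊤ := by
      intro C hC hTop
      apply hnil
      haveI := hC.1
      exact nilpotent_of_mulEquiv (show ↥C ≃* G from hTop ▸ Subgroup.topEquiv)
    obtain ⟨N, hNn, hNb, hmin⟩ := exists_minimal_normal hnt
    have hab := haveI : Group.IsSolvable G := hsol; minimal_normal_abelian hNn hNb hmin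
    obtain ⟨p, hp, hNp⟩ := minimal_normal_pgroup hab hNn hNb hmin
    haveI : Fact (Nat.Prime p) := ⟨hp⟩
    letI := hNn
    have hIm1 := isCarter_map_quotient hsol IH' N hNn hC1
    have hIm2 := isCarter_map_quotient hsol IH' N hNn hC2
    obtain ⟨gb, hgb⟩ := IH' (G ⧸ N) (card_quotient_lt hNn hNb) (show Group.IsSolvable _ from haveI : Group.IsSolvable G := hsol; inferInstance) _ _ hIm1 hIm2
    obtain ⟨g, rfl⟩ := QuotientGroup.mk'_surjective N gb
    set C1' := conjSub g C1 with hC1'def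
    have hC1' : IsCarter C1' := isCarter_conjSub hC1 g
    have hmapeq : C1'.map (QuotientGroup.mk' N) = C2.map (QuotientGroup.mk' N) := by
      rw [hC1'def, map_conjSub]
      exact hgb
    have hsupeq : C1' ⊔ N = C2 ⊔ N := by
      have h := congrArg (Subgroup.comap (QuotientGroup.mk' N)) hmapeq
      rwa [Subgroup.comap_map_eq, Subgroup.comap_map_eq, QuotientGroup.ker_mk'] at h
    by_cases hLtop : C1' ⊔ N = ⊤
    case neg =>
      have hC2L : C2 ≤ C1' ⊔ N := by
        rw [hsupeq]; exact le_sup_left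
      obtain ⟨h, hh⟩ := IH' ↥(C1' ⊔ N) (card_lt_of_ne_top hLtop) (show Group.IsSolvable _ from haveI : Group.IsSolvable G := hsol; inferInstance) _ _
        (isCarter_subgroupOf hC1' le_sup_left) (isCarter_subgroupOf hC2 hC2L)
      have hpush := conjSub_subgroupOf_push le_sup_left hC2L h hh
      exact ⟨(h : G) * g, by rw [← conjSub_conjSub, ← hC1'def, hpush]⟩
    case pos =>
      -- Base case: G = N C for both Carter subgroups
      have hsup2 : C2 ⊔ N = ⊤ := by rw [← hsupeq]; exact hLtop
      -- intersections with N are trivial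
      have hDbot : ∀ C : Subgroup G, IsCarter C → C ⊔ N = ⊤ → C ⊓ N = ⊥ := by
        intro C hC hsupC
        by_contra hne
        have hDn : (C ⊓ N).Normal := by
          rw [← Subgroup.normalizer_eq_top_iff, eq_top_iff, ← hsupC, sup_le_iff]
          constructor
          · intro c hc
            rw [Subgroup.mem_normalizer_iff]
            intro h
            simp only [Subgroup.mem_inf]
            constructor
            · rintro ⟨h1, h2⟩
              exact ⟨C.mul_mem (C.mul_mem hc h1) (C.inv_mem hc), hNn.conj_mem _ h2 c⟩
            · rintro ⟨h1, h2⟩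
              have e : c⁻¹ * (c * h * c⁻¹) * c = h := by group
              constructor
              · have := C.mul_mem (C.mul_mem (C.inv_mem hc) h1) hc
                rwa [show c⁻¹ * (c * h * c⁻¹) * c = h by group] at this
              · have := hNn.conj_mem _ h2 c⁻¹
                rwa [show c⁻¹ * (c * h * c⁻¹) * c⁻¹⁻¹ = h by group] at this
          · intro m hm
            have key : ∀ z ∈ N, m * z * m⁻¹ = z := by
              intro z hz
              rw [hab m hm z hz]; group
            rw [Subgroup.mem_normalizer_iff]
            intro h
            simp only [Subgroup.mem_inf]
            constructor
            · rintro ⟨h1, h2⟩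
              rw [key h h2]; exact ⟨h1, h2⟩
            · rintro ⟨h1, h2⟩
              have hhN : h ∈ N := by
                have := hNn.conj_mem _ h2 m⁻¹
                rwa [show m⁻¹ * (m * h * m⁻¹) * m⁻¹⁻¹ = h by group] at this
              rw [key h hhN] at h1 h2
              exact ⟨h1, h2⟩
        have hNC : N ≤ C := by
          rw [← hmin _ hDn inf_le_right hne]; exact inf_le_left
        exact hCtop_contra C hC (by rw [← hsupC, sup_eq_left.mpr hNC])
      have hinf1 : C1' ⊓ N = ⊥ := hDbot C1' hC1' hLtop
      have hinf2 : C2 ⊓ N = ⊥ := hDbot C2 hC2 hsup2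
      have hcomp : ∀ C : Subgroup G, C ⊔ N = ⊤ → C ⊓ N = ⊥ → N.IsComplement' C := by
        intro C h1 h2
        refine Subgroup.isComplement'_of_disjoint_and_mul_eq_univ
          (disjoint_iff.mpr (by rw [inf_comm]; exact h2)) ?_
        rw [← Subgroup.normal_mul N C, sup_comm N C, h1, Subgroup.coe_top]
      -- E_i := C_i ∩ centralizer N is normal
      have hEn : ∀ C : Subgroup G, C ⊔ N = ⊤ →
          (C ⊓ Subgroup.centralizer (N : Set G)).Normal := by
        intro C hsupC
        rw [← Subgroup.normalizer_eq_top_iff, eq_top_iff, ← hsupC, sup_le_iff]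
        constructor
        · intro c hc
          rw [Subgroup.mem_normalizer_iff]
          intro h
          simp only [Subgroup.mem_inf]
          constructor
          · rintro ⟨h1, h2⟩
            refine ⟨C.mul_mem (C.mul_mem hc h1) (C.inv_mem hc), ?_⟩
            rw [Subgroup.mem_centralizer_iff]
            intro m hm
            have hm' : c⁻¹ * m * c ∈ N := by
              have := hNn.conj_mem m hm c⁻¹
              rwa [inv_inv] at this
            have hcomm := Subgroup.mem_centralizer_iff.mp h2 _ hm'
            have := congrArg (fun z => c * z * c⁻¹) hcomm
            simpa [mul_assoc] using this
          · rintro ⟨h1, h2⟩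
            have hhC : h ∈ C := by
              have := C.mul_mem (C.mul_mem (C.inv_mem hc) h1) hc
              rwa [show c⁻¹ * (c * h * c⁻¹) * c = h by group] at this
            refine ⟨hhC, ?_⟩
            rw [Subgroup.mem_centralizer_iff]
            intro m hm
            have hm' : c * m * c⁻¹ ∈ N := hNn.conj_mem m hm c
            have hcomm := Subgroup.mem_centralizer_iff.mp h2 _ hm'
            have := congrArg (fun z => c⁻¹ * z * c) hcomm
            simpa [mul_assoc] using this
        · intro m hm
          have key : ∀ z, z ∈ Subgroup.centralizer (N : Set G) → m * z * m⁻¹ = z := by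
            intro z hz
            have := Subgroup.mem_centralizer_iff.mp hz m hm
            rw [this]; group
          rw [Subgroup.mem_normalizer_iff]
          intro h
          simp only [Subgroup.mem_inf]
          constructor
          · rintro ⟨h1, h2⟩
            rw [key h h2]; exact ⟨h1, h2⟩
          · rintro ⟨h1, h2⟩
            have heq : m * h * m⁻¹ = h := by
              have := key _ h2
              have e2 : m⁻¹ * (m * (m * h * m⁻¹) * m⁻¹) * m = m * h * m⁻¹ := by group
              calc m * h * m⁻¹ = m⁻¹ * (m * (m * h * m⁻¹) * m⁻¹) * m := e2.symm
              _ = m⁻¹ * (m * h * m⁻¹) * m := by rw [this]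
              _ = h := by group
            rw [heq] at h1 h2
            exact ⟨h1, h2⟩
      by_cases hE1 : C1' ⊓ Subgroup.centralizer (N : Set G) = ⊥
      case neg =>
        -- quotient by E1, get containment, conclude by nilpotency
        set E := C1' ⊓ Subgroup.centralizer (N : Set G) with hEdef
        have hEnormal : E.Normal := hEn C1' hLtop
        letI := hEnormal
        have hI1 := isCarter_map_quotient hsol IH' E hEnormal hC1'
        have hI2 := isCarter_map_quotient hsol IH' E hEnormal hC2
        obtain ⟨g2b, hg2b⟩ := IH' (G ⧸ E) (card_quotient_lt hEnormal hE1) (show Group.IsSolvable _ from haveI : Group.IsSolvable G := hsol; inferInstance) _ _ hI1 hI2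
        obtain ⟨g2, rfl⟩ := QuotientGroup.mk'_surjective E g2b
        have hmapeq2 : (conjSub g2 C1').map (QuotientGroup.mk' E)
            = C2.map (QuotientGroup.mk' E) := by
          rw [map_conjSub]; exact hg2b
        have hsupeq2 : conjSub g2 C1' ⊔ E = C2 ⊔ E := by
          have h := congrArg (Subgroup.comap (QuotientGroup.mk' E)) hmapeq2
          rwa [Subgroup.comap_map_eq, Subgroup.comap_map_eq, QuotientGroup.ker_mk'] at h
        have hEle : E ≤ conjSub g2 C1' := by
          calc E = conjSub g2 E := (conjSub_of_normal hEnormal).symm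
          _ ≤ conjSub g2 C1' := conjSub_le_conjSub inf_le_left
        have hC2le : C2 ≤ conjSub g2 C1' := by
          calc C2 ≤ C2 ⊔ E := le_sup_left
          _ = conjSub g2 C1' ⊔ E := hsupeq2.symm
          _ = conjSub g2 C1' := sup_eq_left.mpr hEle
        have hfinal : C2 = conjSub g2 C1' :=
          carter_eq_of_le_nilpotent hC2le hC2.2 (isCarter_conjSub hC1' g2).1
        exact ⟨g2 * g, by rw [← conjSub_conjSub, ← hC1'def, hfinal]⟩
      case pos =>
      by_cases hE2 : C2 ⊓ Subgroup.centralizer (N : Set G) = ⊥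
      case neg =>
        set E := C2 ⊓ Subgroup.centralizer (N : Set G) with hEdef
        have hEnormal : E.Normal := hEn C2 hsup2
        letI := hEnormal
        have hI1 := isCarter_map_quotient hsol IH' E hEnormal hC1'
        have hI2 := isCarter_map_quotient hsol IH' E hEnormal hC2
        obtain ⟨g2b, hg2b⟩ := IH' (G ⧸ E) (card_quotient_lt hEnormal hE2) (show Group.IsSolvable _ from haveI : Group.IsSolvable G := hsol; inferInstance) _ _ hI2 hI1
        obtain ⟨g2, rfl⟩ := QuotientGroup.mk'_surjective E g2b
        have hmapeq2 : (conjSub g2 C2).map (QuotientGroup.mk' E)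
            = C1'.map (QuotientGroup.mk' E) := by
          rw [map_conjSub]; exact hg2b
        have hsupeq2 : conjSub g2 C2 ⊔ E = C1' ⊔ E := by
          have h := congrArg (Subgroup.comap (QuotientGroup.mk' E)) hmapeq2
          rwa [Subgroup.comap_map_eq, Subgroup.comap_map_eq, QuotientGroup.ker_mk'] at h
        have hEle : E ≤ conjSub g2 C2 := by
          calc E = conjSub g2 E := (conjSub_of_normal hEnormal).symm
          _ ≤ conjSub g2 C2 := conjSub_le_conjSub inf_le_left
        have hC1le : C1' ≤ conjSub g2 C2 := by
          calc C1' ≤ C1' ⊔ E := le_sup_left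
          _ = conjSub g2 C2 ⊔ E := hsupeq2.symm
          _ = conjSub g2 C2 := sup_eq_left.mpr hEle
        have hfinal : C1' = conjSub g2 C2 :=
          carter_eq_of_le_nilpotent hC1le hC1'.2 (isCarter_conjSub hC2 g2).1
        refine ⟨g2⁻¹ * g, ?_⟩
        rw [← conjSub_conjSub, ← hC1'def, hfinal, conjSub_conjSub, inv_mul_cancel, conjSub_one]
      case pos =>
        -- centralizer of N is N itself; C_i are coprime complements
        have hcent : Subgroup.centralizer (N : Set G) ≤ N := by
          intro z hz
          have hzmem : z ∈ (N : Set G) * (C1' : Set G) := by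
            rw [← Subgroup.normal_mul N C1', sup_comm N C1', hLtop]
            trivial
          obtain ⟨a, ha, b, hb, rfl⟩ := hzmem
          have hbC : b ∈ Subgroup.centralizer (N : Set G) := by
            have haC : a ∈ Subgroup.centralizer (N : Set G) := by
              rw [Subgroup.mem_centralizer_iff]
              intro m hm
              exact hab m hm a ha
            have : a⁻¹ * (a * b) ∈ Subgroup.centralizer (N : Set G) :=
              Subgroup.mul_mem _ (Subgroup.inv_mem _ haC) hz
            rwa [inv_mul_cancel_left] at this
          have : b ∈ C1' ⊓ Subgroup.centralizer (N : Set G) := ⟨hb, hbC⟩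
          rw [hE1, Subgroup.mem_bot] at this
          show a * b ∈ N
          rw [this, mul_one]
          exact ha
        have hnd1 : ¬ p ∣ Nat.card ↥C1' :=
          p_not_dvd_card_carter hp hNn hNb hab hNp hmin hC1'.1
            (by rw [sup_comm]; exact hLtop) hinf1 hcent
        have hnd2 : ¬ p ∣ Nat.card ↥C2 :=
          p_not_dvd_card_carter hp hNn hNb hab hNp hmin hC2.1
            (by rw [sup_comm]; exact hsup2) hinf2 hcent
        have hcomp1 : N.IsComplement' C1' := hcomp C1' hLtop hinf1
        have hcomp2 : N.IsComplement' C2 := hcomp C2 hsup2 hinf2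
        have hco : Nat.Coprime (Nat.card ↥N) N.index := by
          rw [hcomp1.symm.index_eq_card]
          obtain ⟨k, hk⟩ := (IsPGroup.iff_card).mp hNp
          rw [hk]
          exact Nat.Coprime.pow_left k ((hp.coprime_iff_not_dvd).mpr hnd1)
        obtain ⟨z, hzeq⟩ := conj_of_complements hNn hab hco hcomp1 hcomp2
        exact ⟨z * g, by rw [← conjSub_conjSub, ← hC1'def, hzeq]⟩

end CarterAux

namespace CarterAux

theorem join_eq_top : ∀ (n : ℕ) (G : Type) [Group G] [Finite G], Nat.card G ≤ n →
    IsSolvable G → ∀ C : Subgroup G, IsCarter C → ∀ J : Subgroup G, (hJ : J.Normal) →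
    (letI := hJ; Group.IsNilpotent (G ⧸ J)) → J ⊔ C = ⊤ := by
  intro n
  induction n with
  | zero =>
    intro G _ _ hcard
    have := Nat.card_pos (α := G)
    omega
  | succ n IH =>
    intro G _ _ hcard hsol C hC J hJ hQnil
    letI := hJ
    have hQnil' : Group.IsNilpotent (G ⧸ J) := hQnil
    by_contra hne
    set H := J ⊔ C with hHdef
    have hJH : J ≤ H := le_sup_left
    have hCH : C ≤ H := le_sup_right
    have hHbar_ne : H.map (QuotientGroup.mk' J) ≠ ⊤ := by
      intro h
      apply hne
      have h2 := congrArg (Subgroup.comap (QuotientGroup.mk' J)) h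
      rw [Subgroup.comap_map_eq, QuotientGroup.ker_mk', Subgroup.comap_top] at h2
      rw [sup_eq_left.mpr hJH] at h2
      exact h2
    -- there is an element normalizing H outside H
    have hnorm : ∃ x : G, x ∈ Subgroup.normalizer (H : Set G) ∧ x ∉ H := by
      haveI := hQnil'
      have hcond := normalizerCondition_of_isNilpotent (G := G ⧸ J)
      have hlt := hcond (H.map (QuotientGroup.mk' J)) (lt_top_iff_ne_top.mpr hHbar_ne)
      obtain ⟨xb, hxb1, hxb2⟩ := SetLike.exists_of_lt hlt
      obtain ⟨x, rfl⟩ := QuotientGroup.mk'_surjective J xb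
      have hkerle : (QuotientGroup.mk' J).ker ≤ H := by
        rw [QuotientGroup.ker_mk']; exact hJH
      refine ⟨x, ?_, fun hxH => hxb2 ⟨x, hxH, rfl⟩⟩
      apply mem_normalizer_of_conjSub
      apply Subgroup.map_injective_of_ker_le (QuotientGroup.mk' J) ?_ hkerle
      · rw [map_conjSub, conjSub_of_mem_normalizer hxb1]
      rw [QuotientGroup.ker_mk']
      calc J = conjSub x J := (conjSub_of_normal hJ).symm
      _ ≤ conjSub x H := conjSub_le_conjSub hJH
    obtain ⟨x, hxn, hxH⟩ := hnorm
    by_cases hNtop : Subgroup.normalizer (H : Set G) = ⊤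
    · -- H is normal and proper; Carter conjugacy forces H = G
      have hHn : H.Normal := Subgroup.normalizer_eq_top_iff.mp hNtop
      have hall : ∀ g : G, g ∈ H := by
        intro g
        have hC'H : conjSub g C ≤ H := by
          calc conjSub g C ≤ conjSub g H := conjSub_le_conjSub hCH
          _ = H := conjSub_of_normal hHn
        obtain ⟨h, hh⟩ := carter_conj (Nat.card ↥H) ↥H le_rfl (show Group.IsSolvable _ from haveI : Group.IsSolvable G := hsol; inferInstance)
          (C.subgroupOf H) ((conjSub g C).subgroupOf H)
          (isCarter_subgroupOf hC hCH) (isCarter_subgroupOf (isCarter_conjSub hC g) hC'H)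
        have hpush := conjSub_subgroupOf_push hCH hC'H h hh
        have hmem : (h : G)⁻¹ * g ∈ C := by
          have h1 : conjSub ((h : G)⁻¹ * g) C = C := by
            rw [← conjSub_conjSub, ← hpush, conjSub_conjSub, inv_mul_cancel, conjSub_one]
          have h2 := mem_normalizer_of_conjSub h1
          rwa [hC.2] at h2
        have hgeq : g = (h : G) * ((h : G)⁻¹ * g) := by group
        rw [hgeq]
        exact H.mul_mem h.2 (hCH hmem)
      exact hxH (hall x)
    · -- the normalizer T is a proper subgroup; apply induction to it
      set T := Subgroup.normalizer (H : Set G) with hTdef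
      have hCT : C ≤ T := le_trans hCH Subgroup.le_normalizer
      have hJT : J ≤ T := le_trans hJH Subgroup.le_normalizer
      have hJTn : (J.subgroupOf T).Normal := by
        constructor
        rintro a ha g
        rw [Subgroup.mem_subgroupOf] at ha ⊢
        exact hJ.conj_mem _ ha _
      letI := hJTn
      -- the quotient T/(J ∩ T) is nilpotent
      have hker : ((QuotientGroup.mk' J).comp T.subtype).ker = J.subgroupOf T := by
        ext y
        rw [MonoidHom.mem_ker, Subgroup.mem_subgroupOf]
        show ((y : G) : G ⧸ J) = 1 ↔ _
        rw [QuotientGroup.eq_one_iff]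
      have hTQnil : Group.IsNilpotent (↥T ⧸ J.subgroupOf T) := by
        haveI := hQnil'
        haveI h1 : Group.IsNilpotent (↥T ⧸ ((QuotientGroup.mk' J).comp T.subtype).ker) :=
          nilpotent_of_mulEquiv
            (QuotientGroup.quotientKerEquivRange ((QuotientGroup.mk' J).comp T.subtype)).symm
        exact nilpotent_of_mulEquiv (QuotientGroup.quotientMulEquivOfEq hker)
      obtain hTsup := IH ↥T (by have := card_lt_of_ne_top hNtop; omega) (show Group.IsSolvable _ from haveI : Group.IsSolvable G := hsol; inferInstance)
        (C.subgroupOf T) (isCarter_subgroupOf hC hCT) (J.subgroupOf T) hJTn hTQnil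
      have hmapT := congrArg (Subgroup.map T.subtype) hTsup
      rw [Subgroup.map_sup, Subgroup.subgroupOf_map_subtype, Subgroup.subgroupOf_map_subtype,
        inf_eq_left.mpr hJT, inf_eq_left.mpr hCT, ← MonoidHom.range_eq_map,
        T.range_subtype] at hmapT
      -- so H = T, contradicting x ∈ T \ H
      rw [← hHdef] at hmapT
      rw [← hmapT] at hxn
      exact hxH hxn
end CarterAux

theorem stmt1 (G : Type) [Group G] [Fintype G] (hsol : IsSolvable G)
    (C : Subgroup G) (hC : IsCarter C)
    (K : Subgroup G) (hKn : K.Normal) (hK : NilpotentResidual K hKn) :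
    K ⊔ C = ⊤ :=
  CarterAux.join_eq_top (Nat.card G) G le_rfl hsol C hC K hKn hK.1

end
end

section
/- Let G be a finite group with a normal subgroup N = KH where K is a normal abelian p-subgroup of G, H is a p'-Hall subgroup of N, and C_K(H) = 1. Then N_G(H) is a complement to K in G, i.e., G = K·N_G(H) and K ∩ N_G(H) = 1. -/
noncomputable section
open scoped Classical

variable {G : Type}

open Subgroup MulAction MulOpposite Pointwise

lemma mem_lt {G : Type*} [Group G] (A C : Subgroup G) (h : IsComplement' A C) :
    IsComplement (C : Set G) (A : Set G) := by
  exact isComplement'_def.mp h.symm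

noncomputable def mkQD {G : Type*} [Group G] (A : Subgroup G) [IsMulCommutative A]
    [A.FiniteIndex] (T : A.LeftTransversal) : A.QuotientDiff :=
  Quotient.mk'' T

lemma stab_eq_self {G : Type*} [Group G] [Finite G] (A : Subgroup G) [A.Normal]
    [IsMulCommutative A] (hcop : Nat.Coprime (Nat.card A) A.index)
    (C : Subgroup G) (h : IsComplement' A C) :
    MulAction.stabilizer G (mkQD A ⟨(C : Set G), mem_lt A C h⟩) = C := by
  set T : A.LeftTransversal := ⟨(C : Set G), mem_lt A C h⟩ with hT
  set α : A.QuotientDiff := mkQD A T with hα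
  have hle : C ≤ MulAction.stabilizer G α := by
    intro g hg
    have hTT : (op g)⁻¹ • T = T := by
      apply Subtype.ext
      show (op g)⁻¹ • (C : Set G) = (C : Set G)
      ext x
      rw [Set.mem_smul_set_iff_inv_smul_mem]
      rw [inv_inv, MulOpposite.smul_eq_mul_unop]
      show x * g ∈ C ↔ x ∈ C
      constructor
      · intro hx; simpa using mul_mem hx (inv_mem hg)
      · intro hx; exact mul_mem hx hg
    have hsmul : g • α = Quotient.mk'' ((op g)⁻¹ • T) := rfl
    rw [MulAction.mem_stabilizer_iff, hsmul, hTT]; rfl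
  have hstab : IsComplement' A (MulAction.stabilizer G α) :=
    isComplement'_stabilizer_of_coprime hcop
  have hcard : Nat.card (MulAction.stabilizer G α) ≤ Nat.card C := by
    have e1 := hstab.card_mul
    have e2 := h.card_mul
    exact le_of_eq (Nat.eq_of_mul_eq_mul_left Nat.card_pos (e1.trans e2.symm))
  exact (Subgroup.eq_of_le_of_card_ge hle hcard).symm

lemma conj_complements {G : Type*} [Group G] [Finite G] (A : Subgroup G) [A.Normal]
    [IsMulCommutative A] (hcop : Nat.Coprime (Nat.card A) A.index)
    (C₁ C₂ : Subgroup G) (h1 : IsComplement' A C₁) (h2 : IsComplement' A C₂) :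
    ∃ a : A, C₂ = C₁.map (MulAut.conj (a : G)).toMonoidHom := by
  obtain ⟨a, ha⟩ := Subgroup.exists_smul_eq hcop
    (mkQD A ⟨(C₁ : Set G), mem_lt A C₁ h1⟩) (mkQD A ⟨(C₂ : Set G), mem_lt A C₂ h2⟩)
  refine ⟨a, ?_⟩
  rw [← stab_eq_self A hcop C₂ h2, ← ha]
  have : (a • mkQD A ⟨(C₁ : Set G), mem_lt A C₁ h1⟩)
      = (a : G) • mkQD A ⟨(C₁ : Set G), mem_lt A C₁ h1⟩ := rfl
  rw [this, stabilizer_smul_eq_stabilizer_map_conj, stab_eq_self A hcop C₁ h1]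



section Helpers
variable {G : Type*} [Group G]

lemma map_conj_eq_of_normal (P : Subgroup G) (hP : P.Normal) (g : G) :
    P.map (MulAut.conj g).toMonoidHom = P := by
  ext x
  simp only [Subgroup.mem_map, MulEquiv.coe_toMonoidHom, MulAut.conj_apply]
  constructor
  · rintro ⟨y, hy, rfl⟩; exact hP.conj_mem y hy g
  · intro hx; exact ⟨g⁻¹ * x * g, by simpa using hP.conj_mem x hx g⁻¹, by group⟩

lemma pgroup_inf_eq_bot [Finite G] (p : ℕ) [Fact p.Prime] {K J : Subgroup G}
    (hKp : IsPGroup p K) (hJ : ¬ p ∣ Nat.card J) : K ⊓ J = ⊥ := by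
  obtain ⟨m, hm⟩ := IsPGroup.iff_card.mp hKp
  refine inf_eq_bot_of_coprime ?_
  rw [hm]
  exact Nat.Coprime.pow_left m ((Nat.Prime.coprime_iff_not_dvd Fact.out).mpr hJ)

lemma compl_aux [Finite G] (p : ℕ) [Fact p.Prime] (K J : Subgroup G) [K.Normal]
    (hKp : IsPGroup p K) (hJ : ¬ p ∣ Nat.card J) :
    IsComplement' (K.subgroupOf (J ⊔ K)) (J.subgroupOf (J ⊔ K)) := by
  have hKM : K ≤ J ⊔ K := le_sup_right
  have hJM : J ≤ J ⊔ K := le_sup_left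
  have hinf : K ⊓ J = ⊥ := pgroup_inf_eq_bot p hKp hJ
  apply isComplement'_of_card_mul_and_disjoint
  · have e1 : Nat.card (K.subgroupOf (J ⊔ K)) = Nat.card K :=
      Nat.card_congr (subgroupOfEquivOfLe hKM).toEquiv
    have e2 : Nat.card (J.subgroupOf (J ⊔ K)) = Nat.card J :=
      Nat.card_congr (subgroupOfEquivOfLe hJM).toEquiv
    have hbot : K.subgroupOf J = ⊥ := by
      rw [eq_bot_iff]
      intro x hx
      have hmem : (x : G) ∈ K ⊓ J := ⟨hx, x.2⟩
      rw [hinf, Subgroup.mem_bot] at hmem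
      exact Subgroup.mem_bot.mpr (Subtype.ext hmem)
    have e3 : (K.subgroupOf (J ⊔ K)).index = Nat.card J := by
      have q := QuotientGroup.quotientInfEquivProdNormalQuotient J K
      calc (K.subgroupOf (J ⊔ K)).index
          = Nat.card ((J ⊔ K : Subgroup G) ⧸ K.subgroupOf (J ⊔ K)) := rfl
        _ = Nat.card (J ⧸ K.subgroupOf J) := (Nat.card_congr q.toEquiv).symm
        _ = Nat.card J := by
            rw [hbot]
            exact Nat.card_congr (QuotientGroup.quotientBot (G := J)).toEquiv
    rw [e2, ← e3]
    exact Subgroup.card_mul_index _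
  · rw [disjoint_iff, eq_bot_iff]
    rintro x ⟨h1, h2⟩
    have hmem : (x : G) ∈ K ⊓ J := ⟨h1, h2⟩
    rw [hinf, Subgroup.mem_bot] at hmem
    exact Subgroup.mem_bot.mpr (Subtype.ext hmem)

end Helpers

theorem stmt4 (G : Type) [Group G] [Fintype G] (p : ℕ) [Fact p.Prime]
    (K H : Subgroup G) (hKn : K.Normal) (hKp : IsPGroup p ↥K)
    (hab : ∀ x y : ↥K, x * y = y * x)
    (hNn : (K ⊔ H).Normal)
    (hHp' : ¬ p ∣ Nat.card ↥H)
    (hHall : ∃ n : ℕ, Nat.card ↥(K ⊔ H) = Nat.card ↥H * p ^ n)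
    (hcent : K ⊓ Subgroup.centralizer (H : Set G) = ⊥) :
    K ⊔ Subgroup.normalizer (H : Set G) = ⊤ ∧ K ⊓ Subgroup.normalizer (H : Set G) = ⊥ := by
  haveI := hKn
  haveI : IsMulCommutative K := ⟨⟨hab⟩⟩
  have hNn' : (H ⊔ K).Normal := (sup_comm K H) ▸ hNn
  have hinfKH : K ⊓ H = ⊥ := pgroup_inf_eq_bot p hKp hHp'
  constructor
  · -- K ⊔ N_G(H) = ⊤
    rw [eq_top_iff]
    rintro g -
    set φ : G →* G := (MulAut.conj g).toMonoidHom with hφ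
    set Hg : Subgroup G := H.map φ with hHgdef
    have hcardHg : Nat.card Hg = Nat.card H :=
      (Nat.card_congr (Subgroup.equivMapOfInjective H φ (MulAut.conj g).injective).toEquiv).symm
    have hHgp' : ¬ p ∣ Nat.card Hg := by rwa [hcardHg]
    have hHgK : Hg ⊔ K = H ⊔ K := by
      calc Hg ⊔ K = H.map φ ⊔ K.map φ := by rw [map_conj_eq_of_normal K hKn g]
        _ = (H ⊔ K).map φ := (Subgroup.map_sup H K φ).symm
        _ = H ⊔ K := map_conj_eq_of_normal (H ⊔ K) hNn' g
    have hc1 : IsComplement' (K.subgroupOf (H ⊔ K)) (H.subgroupOf (H ⊔ K)) :=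
      compl_aux p K H hKp hHp'
    have hc2 : IsComplement' (K.subgroupOf (H ⊔ K)) (Hg.subgroupOf (H ⊔ K)) := by
      have := compl_aux p K Hg hKp hHgp'
      rwa [hHgK] at this
    have hcop : Nat.Coprime (Nat.card (K.subgroupOf (H ⊔ K))) (K.subgroupOf (H ⊔ K)).index := by
      rw [hc1.symm.index_eq_card]
      have e1 : Nat.card (K.subgroupOf (H ⊔ K)) = Nat.card K :=
        Nat.card_congr (subgroupOfEquivOfLe (le_sup_right : K ≤ H ⊔ K)).toEquiv
      have e2 : Nat.card (H.subgroupOf (H ⊔ K)) = Nat.card H :=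
        Nat.card_congr (subgroupOfEquivOfLe (le_sup_left : H ≤ H ⊔ K)).toEquiv
      rw [e1, e2]
      obtain ⟨m, hm⟩ := IsPGroup.iff_card.mp hKp
      rw [hm]
      exact Nat.Coprime.pow_left m ((Nat.Prime.coprime_iff_not_dvd Fact.out).mpr hHp')
    obtain ⟨a, ha⟩ := conj_complements (K.subgroupOf (H ⊔ K)) hcop
      (H.subgroupOf (H ⊔ K)) (Hg.subgroupOf (H ⊔ K)) hc1 hc2
    set k : G := ((a : ↥(H ⊔ K)) : G) with hk
    have hkK : k ∈ K := a.2
    -- push ha down to G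
    have hHgle : Hg ≤ H ⊔ K := le_sup_left.trans hHgK.le
    have hmapeq : Hg = H.map (MulAut.conj k).toMonoidHom := by
      have h1 := congrArg (Subgroup.map (H ⊔ K).subtype) ha
      rw [subgroupOf_map_subtype, inf_eq_left.mpr hHgle, Subgroup.map_map] at h1
      have hcomp : ((H ⊔ K).subtype).comp (MulAut.conj (a : ↥(H ⊔ K))).toMonoidHom
          = (MulAut.conj k).toMonoidHom.comp (H ⊔ K).subtype := by
        ext n; rfl
      rw [hcomp, ← Subgroup.map_map, subgroupOf_map_subtype,
        inf_eq_left.mpr (le_sup_left : H ≤ H ⊔ K)] at h1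
      exact h1
    have hnorm : k⁻¹ * g ∈ Subgroup.normalizer (H : Set G) := by
      rw [Subgroup.mem_normalizer_iff]
      intro h
      constructor
      · intro hh
        have : g * h * g⁻¹ ∈ Hg := ⟨h, hh, rfl⟩
        rw [hmapeq] at this
        obtain ⟨m, hm, hme⟩ := this
        simp only [MulEquiv.coe_toMonoidHom, MulAut.conj_apply] at hme
        have hm2 : m = k⁻¹ * (g * h * g⁻¹) * k := by
          rw [← hme]; group
        have hmh : k⁻¹ * g * h * (k⁻¹ * g)⁻¹ = m := by
          rw [hm2]; group
        rw [hmh]; exact hm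
      · intro hh
        have hmem : g * h * g⁻¹ ∈ Hg := by
          rw [hmapeq]
          refine ⟨(k⁻¹ * g) * h * (k⁻¹ * g)⁻¹, hh, ?_⟩
          simp only [MulEquiv.coe_toMonoidHom, MulAut.conj_apply]
          group
        obtain ⟨m, hm, hme⟩ := hmem
        simp only [hφ, MulEquiv.coe_toMonoidHom, MulAut.conj_apply] at hme
        have h5 : g * m * g⁻¹ = g * h * g⁻¹ := hme
        have : m = h := mul_left_cancel (mul_right_cancel h5)
        rwa [← this]
    have := Subgroup.mul_mem_sup hkK hnorm
    simpa using this
  · -- K ⊓ N_G(H) = ⊥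
    rw [eq_bot_iff]
    rintro x ⟨hxK, hxN⟩
    have hxC : x ∈ Subgroup.centralizer (H : Set G) := by
      rw [Subgroup.mem_centralizer_iff]
      intro h hh
      have h1 : x * h * x⁻¹ ∈ H := (Subgroup.mem_normalizer_iff.mp hxN h).mp hh
      have h2 : x * h * x⁻¹ * h⁻¹ ∈ H := mul_mem h1 (inv_mem hh)
      have h3 : x * h * x⁻¹ * h⁻¹ ∈ K := by
        have : h * x⁻¹ * h⁻¹ ∈ K := by
          have := hKn.conj_mem x⁻¹ (inv_mem hxK) h
          simpa [mul_assoc] using this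
        have := mul_mem hxK this
        simpa [mul_assoc] using this
      have h4 : x * h * x⁻¹ * h⁻¹ ∈ K ⊓ H := ⟨h3, h2⟩
      rw [hinfKH, Subgroup.mem_bot] at h4
      have h6 : x * h * (h * x)⁻¹ = 1 := by
        rw [mul_inv_rev, ← mul_assoc]; exact h4
      exact (mul_inv_eq_one.mp h6).symm
    have : x ∈ K ⊓ Subgroup.centralizer (H : Set G) := ⟨hxK, hxC⟩
    rw [hcent, Subgroup.mem_bot] at this
    simp [this]

end
end
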